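/- arXiv:2510.18164 — 4 statements merged into one kernel-verified Lean document; each statement's English description precedes it below -/
import Mathlib

section
/- Let f be a weighted Boolean CSP instance on n ≥ 1 variables with m ≥ 1 constraints and weighted length ℓ > 0. Let ε ∈ (0,1] and let δ be a real number with δ ≥ 1 + εw/ℓ. Set S_δ = {j ∈ {1,…,n} : ℓ_j ≤ δℓ/n} and r = ⌊n·εw/(δℓ)⌋. Then r ≤ |S_δ|, and the number of assignments z ∈ {0,1}^n with W(f,z) ≥ w* − εw is at least Σ_{i=0}^{r} C(|S_δ|, i), and in particular at least C(|S_δ|, r). -/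
/-- A weighted Boolean constraint satisfaction (MAX-CSP) instance on `n` variables:
`m` constraints, where constraint `i` is specified by a finite set `vars i` of variables,
a predicate `sat i` on assignments whose truth value depends only on the restriction of the
assignment to `vars i`, and a positive real weight `wt i`. -/
structure CSP (n : ℕ) where
  m : ℕ
  vars : Fin m → Finset (Fin n)
  sat : Fin m → (Fin n → Bool) → Bool
  wt : Fin m → ℝ
  wt_pos : ∀ i, 0 < wt i
  sat_local : ∀ i z z', (∀ j ∈ vars i, z j = z' j) → sat i z = sat i z'

namespace CSP

variable {n : ℕ}

/-- The total weight `w = Σᵢ wᵢ`. -/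
noncomputable def totalWeight (f : CSP n) : ℝ := ∑ i, f.wt i

/-- The weighted length `ℓ = Σᵢ |Sᵢ| wᵢ`. -/
noncomputable def wlen (f : CSP n) : ℝ := ∑ i, ((f.vars i).card : ℝ) * f.wt i

/-- The contribution `ℓⱼ` of variable `j`: the sum of the weights of all constraints
containing it. -/
noncomputable def contrib (f : CSP n) (j : Fin n) : ℝ :=
  ∑ i, if j ∈ f.vars i then f.wt i else 0

/-- The weight `W(f,z)` of an assignment `z`: the sum of the weights of the constraints
satisfied by `z`. -/
noncomputable def W (f : CSP n) (z : Fin n → Bool) : ℝ :=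
  ∑ i, if f.sat i z then f.wt i else 0

/-- The optimal weight `w* = max_z W(f,z)`. -/
noncomputable def wstar (f : CSP n) : ℝ :=
  Finset.univ.sup' Finset.univ_nonempty f.W

end CSP

theorem CSP.many_near_optimal_assignments (n : ℕ) (hn : 1 ≤ n) (f : CSP n) (hm : 1 ≤ f.m)
    (hl : 0 < f.wlen) (ε : ℝ) (hε0 : 0 < ε) (hε1 : ε ≤ 1)
    (δ : ℝ) (hδ : 1 + ε * f.totalWeight / f.wlen ≤ δ)
    (Sδ : Finset (Fin n))
    (hSδ : Sδ = Finset.univ.filter (fun j : Fin n => f.contrib j ≤ δ * f.wlen / (n : ℝ)))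
    (r : ℕ) (hr : r = ⌊(n : ℝ) * ε * f.totalWeight / (δ * f.wlen)⌋₊) :
    r ≤ Sδ.card ∧
    (∑ i ∈ Finset.range (r + 1), Sδ.card.choose i) ≤
      Nat.card {z : Fin n → Bool // f.wstar - ε * f.totalWeight ≤ f.W z} ∧
    Sδ.card.choose r ≤
      Nat.card {z : Fin n → Bool // f.wstar - ε * f.totalWeight ≤ f.W z} := by
  classical
  -- basic positivity facts
  have hwpos : 0 < f.totalWeight := by
    have hne : (Finset.univ : Finset (Fin f.m)).Nonempty := ⟨⟨0, hm⟩, Finset.mem_univ _⟩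
    exact Finset.sum_pos (fun i _ => f.wt_pos i) hne
  have hn0 : (0:ℝ) < (n:ℝ) := by exact_mod_cast hn
  have hδpos : 0 < δ := lt_of_lt_of_le
    (by have := div_pos (mul_pos hε0 hwpos) hl; linarith) hδ
  have hδL : f.wlen + ε * f.totalWeight ≤ δ * f.wlen := by
    have h := mul_le_mul_of_nonneg_right hδ hl.le
    have h2 : (1 + ε * f.totalWeight / f.wlen) * f.wlen = f.wlen + ε * f.totalWeight := by
      field_simp
    linarith [h2 ▸ h]
  have hc0 : ∀ j, 0 ≤ f.contrib j := fun j =>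
    Finset.sum_nonneg fun i _ => by
      by_cases h : j ∈ f.vars i <;> simp [h, (f.wt_pos i).le]
  have hsum : ∑ j, f.contrib j = f.wlen := by
    unfold CSP.contrib CSP.wlen
    rw [Finset.sum_comm]
    refine Finset.sum_congr rfl (fun i _ => ?_)
    rw [Finset.sum_ite_mem, Finset.univ_inter, Finset.sum_const, nsmul_eq_mul]
  -- Part 1 : r ≤ Sδ.card
  have hcompl : ∀ j ∈ Sδᶜ, δ * f.wlen / (n:ℝ) < f.contrib j := by
    intro j hj
    rw [Finset.mem_compl, hSδ, Finset.mem_filter] at hj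
    push_neg at hj
    exact hj (Finset.mem_univ _)
  have hk : (Sδᶜ.card : ℝ) * (δ * f.wlen / (n:ℝ)) ≤ f.wlen := by
    calc (Sδᶜ.card : ℝ) * (δ * f.wlen / (n:ℝ))
        ≤ ∑ j ∈ Sδᶜ, f.contrib j := by
          have := Finset.card_nsmul_le_sum Sδᶜ f.contrib (δ * f.wlen / (n:ℝ))
            (fun j hj => (hcompl j hj).le)
          simpa [nsmul_eq_mul] using this
      _ ≤ ∑ j, f.contrib j := Finset.sum_le_sum_of_subset_of_nonneg
          (Finset.subset_univ _) (fun j _ _ => hc0 j)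
      _ = f.wlen := hsum
  have hkn : (Sδ.card : ℝ) + (Sδᶜ.card : ℝ) = (n:ℝ) := by
    have := Finset.card_add_card_compl Sδ
    have h2 : Sδ.card + Sδᶜ.card = n := by simpa using this
    exact_mod_cast h2
  have hk' : (Sδᶜ.card:ℝ) * (δ * f.wlen) ≤ (n:ℝ) * f.wlen := by
    have h := mul_le_mul_of_nonneg_right hk hn0.le
    have h2 : (Sδᶜ.card : ℝ) * (δ * f.wlen / (n:ℝ)) * (n:ℝ)
        = (Sδᶜ.card:ℝ) * (δ * f.wlen) := by
      field_simp
    rw [h2] at h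
    nlinarith
  have hxS : (n:ℝ) * ε * f.totalWeight / (δ * f.wlen) ≤ (Sδ.card : ℝ) := by
    rw [div_le_iff₀ (mul_pos hδpos hl)]
    have e : (Sδ.card:ℝ) = (n:ℝ) - (Sδᶜ.card:ℝ) := by linarith
    rw [e]
    nlinarith [hk', mul_le_mul_of_nonneg_left hδL hn0.le]
  have hr_le : r ≤ Sδ.card := by
    rw [hr]
    calc ⌊(n : ℝ) * ε * f.totalWeight / (δ * f.wlen)⌋₊
        ≤ ⌊(Sδ.card : ℝ)⌋₊ := Nat.floor_le_floor hxS
      _ = Sδ.card := Nat.floor_natCast _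
  -- Part 2 : counting near-optimal assignments
  obtain ⟨z0, -, hz0⟩ := Finset.exists_mem_eq_sup' (Finset.univ_nonempty) f.W
  have hW0 : f.wstar = f.W z0 := hz0
  set flip : Finset (Fin n) → (Fin n → Bool) :=
    fun T j => if j ∈ T then !(z0 j) else z0 j with hflip
  have hinj : Function.Injective flip := by
    intro T T' h
    ext j
    have hj := congrFun h j
    by_cases h1 : j ∈ T <;> by_cases h2 : j ∈ T' <;>
      simp [hflip, h1, h2] at hj ⊢
  have hxnonneg : (0:ℝ) ≤ (n : ℝ) * ε * f.totalWeight / (δ * f.wlen) :=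
    div_nonneg (mul_nonneg (mul_nonneg hn0.le hε0.le) hwpos.le) (mul_pos hδpos hl).le
  have hkey : ∀ T : Finset (Fin n), T ⊆ Sδ → T.card ≤ r →
      f.wstar - ε * f.totalWeight ≤ f.W (flip T) := by
    intro T hTS hTr
    have hstep1 : f.W z0 - f.W (flip T) ≤ ∑ j ∈ T, f.contrib j := by
      have hdiff : f.W z0 - f.W (flip T)
          = ∑ i, ((if f.sat i z0 then f.wt i else 0)
            - (if f.sat i (flip T) then f.wt i else 0)) := by
        unfold CSP.W; rw [← Finset.sum_sub_distrib]
      have hswap : ∑ j ∈ T, f.contrib j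
          = ∑ i, ∑ j ∈ T, (if j ∈ f.vars i then f.wt i else 0) := by
        unfold CSP.contrib; rw [Finset.sum_comm]
      rw [hdiff, hswap]
      refine Finset.sum_le_sum (fun i _ => ?_)
      have hterm0 : ∀ j, (0:ℝ) ≤ if j ∈ f.vars i then f.wt i else 0 := fun j => by
        by_cases h : j ∈ f.vars i <;> simp [h, (f.wt_pos i).le]
      by_cases hd : ∃ j ∈ T, j ∈ f.vars i
      · obtain ⟨j0, hj0T, hj0v⟩ := hd
        have h1 : f.wt i ≤ ∑ j ∈ T, (if j ∈ f.vars i then f.wt i else 0) := by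
          have := Finset.single_le_sum
            (f := fun j => if j ∈ f.vars i then f.wt i else 0)
            (fun j _ => hterm0 j) hj0T
          simpa [hj0v] using this
        have h2 : (if f.sat i z0 then f.wt i else 0)
            - (if f.sat i (flip T) then f.wt i else 0) ≤ f.wt i := by
          have := (f.wt_pos i).le
          split <;> split <;> linarith
        linarith
      · push_neg at hd
        have heq : f.sat i (flip T) = f.sat i z0 :=
          f.sat_local i (flip T) z0 (fun j hj => by
            have hjT : j ∉ T := fun hjT => hd j hjT hj
            simp [hflip, hjT])
        rw [heq]
        have := Finset.sum_nonneg (fun j (_ : j ∈ T) => hterm0 j)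
        linarith
    have hT1 : ∑ j ∈ T, f.contrib j ≤ (T.card:ℝ) * (δ * f.wlen / (n:ℝ)) := by
      calc ∑ j ∈ T, f.contrib j ≤ ∑ _j ∈ T, δ * f.wlen / (n:ℝ) :=
            Finset.sum_le_sum (fun j hj => by
              have hmem := hTS hj
              rw [hSδ, Finset.mem_filter] at hmem
              exact hmem.2)
        _ = (T.card:ℝ) * (δ * f.wlen / (n:ℝ)) := by
            rw [Finset.sum_const, nsmul_eq_mul]
    have hrx : (r:ℝ) ≤ (n : ℝ) * ε * f.totalWeight / (δ * f.wlen) := by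
      rw [hr]; exact Nat.floor_le hxnonneg
    have hq0 : (0:ℝ) ≤ δ * f.wlen / (n:ℝ) :=
      div_nonneg (mul_pos hδpos hl).le hn0.le
    have hTc : (T.card : ℝ) ≤ (r:ℝ) := by exact_mod_cast hTr
    have hxw : (n : ℝ) * ε * f.totalWeight / (δ * f.wlen) * (δ * f.wlen / (n:ℝ))
        = ε * f.totalWeight := by
      field_simp
    have hsmall : ∑ j ∈ T, f.contrib j ≤ ε * f.totalWeight := by
      calc ∑ j ∈ T, f.contrib j ≤ (T.card:ℝ) * (δ * f.wlen / (n:ℝ)) := hT1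
        _ ≤ (r:ℝ) * (δ * f.wlen / (n:ℝ)) := mul_le_mul_of_nonneg_right hTc hq0
        _ ≤ (n : ℝ) * ε * f.totalWeight / (δ * f.wlen) * (δ * f.wlen / (n:ℝ)) :=
            mul_le_mul_of_nonneg_right hrx hq0
        _ = ε * f.totalWeight := hxw
    rw [hW0]
    linarith
  set F : Finset (Finset (Fin n)) :=
    (Finset.range (r+1)).biUnion (fun i => Sδ.powersetCard i) with hF
  have hFcard : F.card = ∑ i ∈ Finset.range (r + 1), Sδ.card.choose i := by
    rw [hF, Finset.card_biUnion]
    · exact Finset.sum_congr rfl (fun i _ => Finset.card_powersetCard i Sδ)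
    · intro a _ b _ hab
      simp only [Finset.disjoint_left]
      intro T hTa hTb
      rw [Finset.mem_powersetCard] at hTa hTb
      exact hab (by rw [← hTa.2, hTb.2])
  have hmain : ∀ s : Finset (Fin n → Bool),
      (∀ z ∈ s, f.wstar - ε * f.totalWeight ≤ f.W z) →
      s.card ≤ Nat.card {z : Fin n → Bool // f.wstar - ε * f.totalWeight ≤ f.W z} := by
    intro s hs
    rw [Nat.card_eq_fintype_card]
    calc s.card = Fintype.card s := (Fintype.card_coe s).symm
      _ ≤ _ := Fintype.card_le_of_injective (fun x => ⟨x.1, hs x.1 x.2⟩)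
            (by intro a b h; have h' := congrArg Subtype.val h; exact Subtype.ext h')
  have hmemA : ∀ z ∈ F.image flip, f.wstar - ε * f.totalWeight ≤ f.W z := by
    intro z hz
    obtain ⟨T, hTF, rfl⟩ := Finset.mem_image.mp hz
    rw [hF, Finset.mem_biUnion] at hTF
    obtain ⟨i, hi, hTi⟩ := hTF
    rw [Finset.mem_powersetCard] at hTi
    rw [Finset.mem_range] at hi
    exact hkey T hTi.1 (by rw [hTi.2]; omega)
  have hsum_le : (∑ i ∈ Finset.range (r + 1), Sδ.card.choose i) ≤
      Nat.card {z : Fin n → Bool // f.wstar - ε * f.totalWeight ≤ f.W z} := by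
    calc (∑ i ∈ Finset.range (r + 1), Sδ.card.choose i) = F.card := hFcard.symm
      _ = (F.image flip).card := (Finset.card_image_of_injective F hinj).symm
      _ ≤ _ := hmain (F.image flip) hmemA
  refine ⟨hr_le, hsum_le, ?_⟩
  calc Sδ.card.choose r ≤ ∑ i ∈ Finset.range (r + 1), Sδ.card.choose i :=
        Finset.single_le_sum (f := fun i => Sδ.card.choose i)
          (fun i _ => Nat.zero_le _) (Finset.self_mem_range_succ r)
    _ ≤ _ := hsum_le
end

section
/- Let f be a weighted Boolean CSP instance on n ≥ 1 variables with m ≥ 1 constraints and weighted length ℓ > 0. Let ε ∈ (0,1] and let δ be a real number with δ ≥ 1 + εw/ℓ (so δ > 1). Set r = ⌊n·εw/(δℓ)⌋. Then the number of assignments z ∈ {0,1}^n with W(f,z) ≥ w* − εw is at least 2^{H(rδ/((δ−1)n)) · ((δ−1)/δ)·n} / (n+1). -/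
/-- The binary entropy function `H(p) = -p log₂ p - (1-p) log₂ (1-p)`,
with the convention `0 log₂ 0 = 0` (enforced by `Real.logb 2 0 = 0`). -/
noncomputable def binH (p : ℝ) : ℝ := -p * Real.logb 2 p - (1 - p) * Real.logb 2 (1 - p)

section Aux

set_option maxHeartbeats 1000000

open Finset

lemma step_up {k r i : ℕ} (hir : i < r) (hrk : r ≤ k) :
    k.choose i * r ^ i * (k - r) ^ (k - i) ≤
      k.choose (i+1) * r ^ (i+1) * (k - r) ^ (k - (i+1)) := by
  have hik : i < k := lt_of_lt_of_le hir hrk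
  have hki : k - i = (k - (i+1)) + 1 := by omega
  rw [hki, pow_succ]
  have key : k.choose i * (k - r) ≤ k.choose (i+1) * r := by
    have h1 : k.choose (i+1) * (i+1) = k.choose i * (k - i) := Nat.choose_succ_right_eq k i
    have h2 : (k - r) * (i+1) ≤ (k - i) * r :=
      Nat.mul_le_mul (Nat.sub_le_sub_left hir.le k) hir
    have h3 : k.choose i * (k - r) * (i+1) ≤ k.choose (i+1) * r * (i+1) := by
      calc k.choose i * (k - r) * (i+1) = k.choose i * ((k-r) * (i+1)) := by ring
        _ ≤ k.choose i * ((k - i) * r) := Nat.mul_le_mul_left _ h2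
        _ = k.choose (i+1) * (i+1) * r := by rw [h1]; ring
        _ = k.choose (i+1) * r * (i+1) := by ring
    exact Nat.le_of_mul_le_mul_right h3 (Nat.succ_pos i)
  calc k.choose i * r^i * ((k-r)^(k-(i+1)) * (k-r))
      = (k.choose i * (k-r)) * (r^i * (k-r)^(k-(i+1))) := by ring
    _ ≤ (k.choose (i+1) * r) * (r^i * (k-r)^(k-(i+1))) := Nat.mul_le_mul_right _ key
    _ = k.choose (i+1) * r^(i+1) * (k-r)^(k-(i+1)) := by ring

lemma step_down {k r i : ℕ} (hri : r ≤ i) (hik : i < k) :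
    k.choose (i+1) * r ^ (i+1) * (k - r) ^ (k - (i+1)) ≤
      k.choose i * r ^ i * (k - r) ^ (k - i) := by
  have hki : k - i = (k - (i+1)) + 1 := by omega
  rw [hki, pow_succ]
  have key : k.choose (i+1) * r ≤ k.choose i * (k - r) := by
    have h1 : k.choose (i+1) * (i+1) = k.choose i * (k - i) := Nat.choose_succ_right_eq k i
    have h2 : (k - i) * r ≤ (k - r) * (i+1) :=
      Nat.mul_le_mul (Nat.sub_le_sub_left hri k) (by omega)
    have h3 : k.choose (i+1) * r * (i+1) ≤ k.choose i * (k - r) * (i+1) := by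
      calc k.choose (i+1) * r * (i+1) = k.choose (i+1) * (i+1) * r := by ring
        _ = k.choose i * ((k - i) * r) := by rw [h1]; ring
        _ ≤ k.choose i * ((k - r) * (i+1)) := Nat.mul_le_mul_left _ h2
        _ = k.choose i * (k - r) * (i+1) := by ring
    exact Nat.le_of_mul_le_mul_right h3 (Nat.succ_pos i)
  calc k.choose (i+1) * r^(i+1) * (k-r)^(k-(i+1))
      = (k.choose (i+1) * r) * (r^i * (k-r)^(k-(i+1))) := by ring
    _ ≤ (k.choose i * (k-r)) * (r^i * (k-r)^(k-(i+1))) := Nat.mul_le_mul_right _ key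
    _ = k.choose i * r^i * ((k-r)^(k-(i+1)) * (k-r)) := by ring

lemma term_le {k r : ℕ} (hrk : r ≤ k) :
    ∀ i ≤ k, k.choose i * r^i * (k-r)^(k-i) ≤ k.choose r * r^r * (k-r)^(k-r) := by
  have up : ∀ d, d ≤ r → k.choose (r-d) * r^(r-d) * (k-r)^(k-(r-d)) ≤
      k.choose r * r^r * (k-r)^(k-r) := by
    intro d
    induction d with
    | zero => simp
    | succ d ih =>
      intro hd
      have h1 : r - (d+1) < r := by omega
      have h2 : r - (d+1) + 1 = r - d := by omega
      calc k.choose (r-(d+1)) * r^(r-(d+1)) * (k-r)^(k-(r-(d+1)))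
          ≤ k.choose (r-(d+1)+1) * r^(r-(d+1)+1) * (k-r)^(k-(r-(d+1)+1)) :=
            step_up h1 hrk
        _ = k.choose (r-d) * r^(r-d) * (k-r)^(k-(r-d)) := by rw [h2]
        _ ≤ _ := ih (by omega)
  have down : ∀ d, r + d ≤ k → k.choose (r+d) * r^(r+d) * (k-r)^(k-(r+d)) ≤
      k.choose r * r^r * (k-r)^(k-r) := by
    intro d
    induction d with
    | zero => simp
    | succ d ih =>
      intro hd
      have : r + (d+1) = (r+d) + 1 := by omega
      rw [this]
      calc k.choose ((r+d)+1) * r^((r+d)+1) * (k-r)^(k-((r+d)+1))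
          ≤ k.choose (r+d) * r^(r+d) * (k-r)^(k-(r+d)) :=
            step_down (by omega) (by omega)
        _ ≤ _ := ih (by omega)
  intro i hik
  rcases le_or_gt i r with h | h
  · have := up (r - i) (by omega)
    rwa [show r - (r - i) = i by omega] at this
  · have := down (i - r) (by omega)
    rwa [show r + (i - r) = i by omega] at this

lemma nat_key {k r : ℕ} (hrk : r ≤ k) :
    k^k ≤ (k+1) * (k.choose r * r^r * (k-r)^(k-r)) := by
  have hb : k^k = ∑ i ∈ range (k+1), k.choose i * r^i * (k-r)^(k-i) := by
    have := add_pow r (k - r) k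
    rw [Nat.add_sub_cancel' hrk] at this
    rw [this]
    exact Finset.sum_congr rfl fun i _ => by push_cast [Nat.cast_id]; ring
  rw [hb]
  calc ∑ i ∈ range (k+1), k.choose i * r^i * (k-r)^(k-i)
      ≤ (range (k+1)).card • (k.choose r * r^r * (k-r)^(k-r)) := by
        apply Finset.sum_le_card_nsmul
        intro i hi
        exact term_le hrk i (by simpa using Nat.lt_succ_iff.mp (mem_range.mp hi))
    _ = (k+1) * (k.choose r * r^r * (k-r)^(k-r)) := by
        rw [card_range, smul_eq_mul]


lemma exp_nat_log (m : ℕ) : Real.exp (m * Real.log m) = (m:ℝ)^m := by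
  rcases Nat.eq_zero_or_pos m with h | h
  · subst h; simp
  · have hm : (0:ℝ) < (m:ℝ)^m := by positivity
    rw [← Real.log_pow, Real.exp_log hm]

lemma binH_id (r : ℕ) (x : ℝ) (hx : 0 < x) (hrx : (r:ℝ) ≤ x) :
    x * binH ((r:ℝ) / x) * Real.log 2 =
      x * Real.log x - (x - r) * Real.log (x - r) - r * Real.log r := by
  have hxne : x ≠ 0 := ne_of_gt hx
  have hl2 : (0:ℝ) < Real.log 2 := Real.log_pos one_lt_two
  have h1 : (r:ℝ) * Real.log ((r:ℝ)/x) = (r:ℝ) * (Real.log r - Real.log x) := by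
    rcases eq_or_ne (r:ℝ) 0 with h | h
    · simp [h]
    · rw [Real.log_div h hxne]
  have h2 : (x - r) * Real.log ((x - r)/x) = (x - r) * (Real.log (x-r) - Real.log x) := by
    rcases eq_or_ne (x - (r:ℝ)) 0 with h | h
    · simp [h]
    · rw [Real.log_div h hxne]
  have hone : 1 - (r:ℝ)/x = (x - r)/x := by field_simp
  have e1 : binH ((r:ℝ)/x) * Real.log 2 =
      -((r:ℝ)/x) * Real.log ((r:ℝ)/x) - ((x-r)/x) * Real.log ((x-r)/x) := by
    unfold binH
    rw [hone, Real.logb, Real.logb]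
    field_simp
  have e2 : x * binH ((r:ℝ)/x) * Real.log 2 =
      -((r:ℝ) * Real.log ((r:ℝ)/x)) - ((x-r) * Real.log ((x-r)/x)) := by
    rw [mul_assoc, e1]
    field_simp
  rw [e2, h1, h2]
  ring

lemma psi_mono (r : ℕ) :
    MonotoneOn (fun x : ℝ => x * Real.log x - (x - r) * Real.log (x - r))
      (Set.Ici (r:ℝ)) := by
  have hr : (0:ℝ) ≤ r := Nat.cast_nonneg r
  have hcont : ContinuousOn (fun x : ℝ => x * Real.log x - (x - r) * Real.log (x - r))
      (Set.Ici (r:ℝ)) := by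
    apply Continuous.continuousOn
    exact Real.continuous_mul_log.sub
      (Real.continuous_mul_log.comp (continuous_id.sub continuous_const))
  have hd : ∀ x ∈ Set.Ioi (r:ℝ),
      HasDerivAt (fun x : ℝ => x * Real.log x - (x - r) * Real.log (x - r))
        (Real.log x - Real.log (x - r)) x := by
    intro x hx
    have hx0 : (0:ℝ) < x := lt_of_le_of_lt hr hx
    have hxr : (0:ℝ) < x - r := by simp only [Set.mem_Ioi] at hx; linarith
    have h1 : HasDerivAt (fun x : ℝ => x * Real.log x) (Real.log x + 1) x :=
      Real.hasDerivAt_mul_log (ne_of_gt hx0)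
    have h2 : HasDerivAt (fun x : ℝ => (x - r) * Real.log (x - r))
        (Real.log (x - r) + 1) x := by
      have hinner : HasDerivAt (fun x : ℝ => x - (r:ℝ)) 1 x := (hasDerivAt_id x).sub_const (r:ℝ)
      have := (Real.hasDerivAt_mul_log (ne_of_gt hxr)).comp x hinner
      rw [mul_one] at this
      exact this
    have := h1.sub h2
    rw [show Real.log x - Real.log (x - r) = Real.log x + 1 - (Real.log (x - r) + 1) by ring]
    exact this
  apply monotoneOn_of_deriv_nonneg (convex_Ici _) hcont
  · intro x hx
    rw [interior_Ici] at hx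
    exact ((hd x hx).differentiableAt).differentiableWithinAt
  · intro x hx
    rw [interior_Ici] at hx
    rw [(hd x hx).deriv]
    have hxr : (0:ℝ) < x - r := by simp only [Set.mem_Ioi] at hx; linarith
    have : x - (r:ℝ) ≤ x := by linarith
    linarith [Real.log_le_log hxr this]

lemma mul_binH_mono (r : ℕ) {a b : ℝ} (ha : 0 < a) (hra : (r:ℝ) ≤ a) (hab : a ≤ b) :
    a * binH ((r:ℝ)/a) ≤ b * binH ((r:ℝ)/b) := by
  have hb : 0 < b := lt_of_lt_of_le ha hab
  have hrb : (r:ℝ) ≤ b := le_trans hra hab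
  have hψ := psi_mono r (Set.mem_Ici.mpr hra) (Set.mem_Ici.mpr hrb) hab
  have ea := binH_id r a ha hra
  have eb := binH_id r b hb hrb
  have hl2 : (0:ℝ) < Real.log 2 := Real.log_pos one_lt_two
  have key : a * binH ((r:ℝ)/a) * Real.log 2 ≤ b * binH ((r:ℝ)/b) * Real.log 2 := by
    rw [ea, eb]
    simp only at hψ
    linarith
  exact le_of_mul_le_mul_right key hl2

lemma choose_entropy {k r : ℕ} (hrk : r ≤ k) (hk : 0 < k) :
    (2:ℝ) ^ ((k:ℝ) * binH ((r:ℝ)/(k:ℝ))) ≤ ((k:ℝ)+1) * (k.choose r) := by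
  have hk0 : (0:ℝ) < (k:ℝ) := by exact_mod_cast hk
  have hrk' : (r:ℝ) ≤ (k:ℝ) := by exact_mod_cast hrk
  have hkr : ((k - r : ℕ):ℝ) = (k:ℝ) - r := Nat.cast_sub hrk
  have hid := binH_id r k hk0 hrk'
  rw [Real.rpow_def_of_pos (by norm_num)]
  have hE : Real.log 2 * ((k:ℝ) * binH ((r:ℝ)/(k:ℝ))) =
      (k:ℝ) * Real.log k - ((k-r:ℕ):ℝ) * Real.log ((k-r:ℕ):ℝ) - (r:ℝ) * Real.log r := by
    rw [hkr]; linarith [hid]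
  rw [hE, Real.exp_sub, Real.exp_sub, exp_nat_log, exp_nat_log, exp_nat_log]
  have hrr : (0:ℝ) < (r:ℝ)^r := by
    rcases Nat.eq_zero_or_pos r with h | h
    · subst h; norm_num
    · positivity
  have hkrkr : (0:ℝ) < ((k-r:ℕ):ℝ)^(k-r) := by
    rcases Nat.eq_zero_or_pos (k - r) with h | h
    · rw [h]; norm_num
    · positivity
  rw [div_div, div_le_iff₀ (by positivity)]
  have hnat := nat_key hrk
  have hcast : ((k:ℝ))^k ≤ ((k:ℝ)+1) * ((k.choose r : ℝ) * (r:ℝ)^r * ((k-r:ℕ):ℝ)^(k-r)) := by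
    exact_mod_cast hnat
  calc ((k:ℝ))^k ≤ ((k:ℝ)+1) * ((k.choose r : ℝ) * (r:ℝ)^r * ((k-r:ℕ):ℝ)^(k-r)) := hcast
    _ = ((k:ℝ)+1) * (k.choose r) * (((k-r:ℕ):ℝ)^(k-r) * (r:ℝ)^r) := by ring


namespace CSP

variable {n : ℕ}

lemma contrib_nonneg (f : CSP n) (j : Fin n) : 0 ≤ f.contrib j := by
  unfold contrib
  apply Finset.sum_nonneg
  intro i _
  split_ifs
  · exact (f.wt_pos i).le
  · exact le_refl 0

lemma sum_contrib (f : CSP n) : ∑ j, f.contrib j = f.wlen := by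
  unfold contrib wlen
  rw [Finset.sum_comm]
  refine Finset.sum_congr rfl fun i _ => ?_
  rw [Finset.sum_ite_mem, Finset.univ_inter, Finset.sum_const, nsmul_eq_mul]

lemma W_flip (f : CSP n) (z : Fin n → Bool) (S : Finset (Fin n)) :
    f.W z - ∑ j ∈ S, f.contrib j ≤ f.W (fun j => if j ∈ S then !z j else z j) := by
  classical
  set z' : Fin n → Bool := fun j => if j ∈ S then !z j else z j with hz'
  have key : f.W z - f.W z' ≤ ∑ i, ∑ j ∈ S, (if j ∈ f.vars i then f.wt i else 0) := by
    unfold W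
    rw [← Finset.sum_sub_distrib]
    apply Finset.sum_le_sum
    intro i _
    by_cases hc : ∃ j ∈ S, j ∈ f.vars i
    · obtain ⟨j0, hj0S, hj0v⟩ := hc
      have h1 : (if f.sat i z then f.wt i else 0) - (if f.sat i z' then f.wt i else 0)
          ≤ f.wt i := by
        have := (f.wt_pos i).le
        split_ifs <;> linarith
      have h2 : f.wt i ≤ ∑ j ∈ S, (if j ∈ f.vars i then f.wt i else 0) := by
        have := Finset.single_le_sum (f := fun j => if j ∈ f.vars i then f.wt i else 0)
          (fun j _ => by split_ifs; exacts [(f.wt_pos i).le, le_refl 0]) hj0S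
        simpa [hj0v] using this
      linarith
    · push_neg at hc
      have heq : f.sat i z = f.sat i z' := by
        apply f.sat_local
        intro j hj
        have : j ∉ S := fun hjS => hc j hjS hj
        simp [hz', this]
      rw [heq]
      simp only [sub_self]
      apply Finset.sum_nonneg
      intro j _
      split_ifs
      · exact (f.wt_pos i).le
      · exact le_refl 0
  have hswap : ∑ i, ∑ j ∈ S, (if j ∈ f.vars i then f.wt i else 0)
      = ∑ j ∈ S, f.contrib j := by
    rw [Finset.sum_comm]
    rfl
  rw [hswap] at key
  linarith

end CSP

theorem CSP.count_near_optimal_lower_bound (n : ℕ) (hn : 1 ≤ n) (f : CSP n) (hm : 1 ≤ f.m)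
    (hl : 0 < f.wlen) (ε : ℝ) (hε0 : 0 < ε) (hε1 : ε ≤ 1)
    (δ : ℝ) (hδ : 1 + ε * f.totalWeight / f.wlen ≤ δ)
    (r : ℕ) (hr : r = ⌊(n : ℝ) * ε * f.totalWeight / (δ * f.wlen)⌋₊) :
    (2 : ℝ) ^ (binH ((r : ℝ) * δ / ((δ - 1) * (n : ℝ))) * ((δ - 1) / δ) * (n : ℝ)) / ((n : ℝ) + 1)
      ≤ (Nat.card {z : Fin n → Bool // f.wstar - ε * f.totalWeight ≤ f.W z} : ℝ) := by
  classical
  have hn0 : (0:ℝ) < (n:ℝ) := by exact_mod_cast hn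
  have hw : 0 < f.totalWeight := by
    apply Finset.sum_pos (fun i _ => f.wt_pos i)
    have : Nonempty (Fin f.m) := ⟨⟨0, hm⟩⟩
    exact Finset.univ_nonempty
  have hδ1 : 1 < δ := by
    have : 0 < ε * f.totalWeight / f.wlen := by positivity
    linarith
  have hδ0 : 0 < δ := by linarith
  -- the threshold and cheap set
  set t : ℝ := δ * f.wlen / n with ht
  have ht0 : 0 < t := by positivity
  set T : Finset (Fin n) := Finset.univ.filter (fun j => f.contrib j ≤ t) with hT
  set k : ℕ := T.card with hk
  have hkn : k ≤ n := by
    calc k ≤ Fintype.card (Fin n) := Finset.card_le_univ T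
      _ = n := Fintype.card_fin n
  -- Markov bound : a ≤ k
  set a : ℝ := (δ - 1) / δ * n with ha
  have ha0 : 0 < a := by
    have : 0 < δ - 1 := by linarith
    positivity
  have hcomplsum : ((n - k : ℕ):ℝ) * t ≤ f.wlen := by
    have h1 : Tᶜ.card • t ≤ ∑ j ∈ Tᶜ, f.contrib j := by
      apply Finset.card_nsmul_le_sum
      intro j hj
      have : ¬ (f.contrib j ≤ t) := by
        simpa [hT] using (Finset.mem_compl.mp hj)
      linarith
    have h2 : ∑ j ∈ Tᶜ, f.contrib j ≤ f.wlen := by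
      rw [← f.sum_contrib]
      exact Finset.sum_le_sum_of_subset_of_nonneg (Finset.subset_univ _)
        (fun j _ _ => f.contrib_nonneg j)
    have h3 : Tᶜ.card = n - k := by
      rw [Finset.card_compl, Fintype.card_fin]
    rw [h3, nsmul_eq_mul] at h1
    linarith
  have hak : a ≤ (k:ℝ) := by
    have hnk : ((n - k : ℕ):ℝ) = (n:ℝ) - k := by
      rw [Nat.cast_sub hkn]
    rw [hnk, ht] at hcomplsum
    -- ((n:ℝ) - k) * (δ * wlen / n) ≤ wlen
    have h4 : ((n:ℝ) - k) * δ ≤ n := by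
      have hmul := mul_le_mul_of_nonneg_right hcomplsum (le_of_lt (by positivity : (0:ℝ) < (n:ℝ) / f.wlen))
      have e : ((n:ℝ) - k) * (δ * f.wlen / n) * ((n:ℝ) / f.wlen) = ((n:ℝ) - k) * δ := by
        field_simp
      have e2 : f.wlen * ((n:ℝ)/f.wlen) = n := by field_simp
      rw [e, e2] at hmul
      exact hmul
    rw [ha, div_mul_eq_mul_div, div_le_iff₀ hδ0]
    nlinarith
  -- bounds on r
  have hfloorarg : (0:ℝ) ≤ (n : ℝ) * ε * f.totalWeight / (δ * f.wlen) := by positivity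
  have hru : (r:ℝ) ≤ (n : ℝ) * ε * f.totalWeight / (δ * f.wlen) := by
    rw [hr]; exact Nat.floor_le hfloorarg
  have hεwl : ε * f.totalWeight ≤ (δ - 1) * f.wlen := by
    have h1 : ε * f.totalWeight / f.wlen ≤ δ - 1 := by linarith
    calc ε * f.totalWeight = (ε * f.totalWeight / f.wlen) * f.wlen := by field_simp
      _ ≤ (δ - 1) * f.wlen := mul_le_mul_of_nonneg_right h1 hl.le
  have hra : (r:ℝ) ≤ a := by
    refine le_trans hru ?_
    rw [ha, div_le_iff₀ (by positivity : (0:ℝ) < δ * f.wlen)]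
    have : (δ - 1) / δ * ↑n * (δ * f.wlen) = (δ - 1) * f.wlen * n := by field_simp
    rw [this]
    nlinarith
  have hrt : (r:ℝ) * t ≤ ε * f.totalWeight := by
    have := mul_le_mul_of_nonneg_right hru ht0.le
    have e : (n : ℝ) * ε * f.totalWeight / (δ * f.wlen) * t = ε * f.totalWeight := by
      rw [ht]; field_simp
    rw [e] at this
    exact this
  have hrk : r ≤ k := by
    have : (r:ℝ) ≤ (k:ℝ) := le_trans hra hak
    exact_mod_cast this
  have hk0 : 0 < k := by
    have : (0:ℝ) < (k:ℝ) := lt_of_lt_of_le ha0 hak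
    exact_mod_cast this
  -- the optimal assignment
  obtain ⟨z0, _, hz0⟩ := Finset.exists_mem_eq_sup' (Finset.univ_nonempty) f.W
  -- counting: flips of subsets of T of size r are near optimal
  set P : (Fin n → Bool) → Prop := fun z => f.wstar - ε * f.totalWeight ≤ f.W z with hP
  set flip : Finset (Fin n) → (Fin n → Bool) := fun S => fun j => if j ∈ S then !z0 j else z0 j
    with hflip
  have hmem : ∀ S ∈ Finset.powersetCard r T, P (flip S) := by
    intro S hS
    obtain ⟨hST, hScard⟩ := Finset.mem_powersetCard.mp hS
    have hsum : ∑ j ∈ S, f.contrib j ≤ ε * f.totalWeight := by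
      calc ∑ j ∈ S, f.contrib j ≤ ∑ _j ∈ S, t := by
            apply Finset.sum_le_sum
            intro j hj
            have := hST hj
            rw [hT] at this
            simpa using (Finset.mem_filter.mp this).2
        _ = S.card • t := (Finset.sum_const t)
        _ = (r:ℝ) * t := by rw [hScard, nsmul_eq_mul]
        _ ≤ ε * f.totalWeight := hrt
    have := f.W_flip z0 S
    have hws : f.wstar = f.W z0 := hz0
    rw [hP]
    simp only
    rw [hws]
    calc f.W z0 - ε * f.totalWeight ≤ f.W z0 - ∑ j ∈ S, f.contrib j := by linarith
      _ ≤ f.W (flip S) := this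
  have hinj : Set.InjOn flip (Finset.powersetCard r T : Set (Finset (Fin n))) := by
    intro S hS S' hS' h
    ext j
    have hj := congrFun h j
    simp only [hflip] at hj
    by_cases h1 : j ∈ S <;> by_cases h2 : j ∈ S' <;> simp_all
  have hcount : (k.choose r : ℝ) ≤
      (Nat.card {z : Fin n → Bool // f.wstar - ε * f.totalWeight ≤ f.W z} : ℝ) := by
    have hcard : Nat.card {z : Fin n → Bool // f.wstar - ε * f.totalWeight ≤ f.W z}
        = (Finset.univ.filter P).card := by
      rw [Nat.card_eq_fintype_card, Fintype.card_subtype]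
    have hsub : (Finset.powersetCard r T).image flip ⊆ Finset.univ.filter P := by
      intro z hz
      obtain ⟨S, hS, rfl⟩ := Finset.mem_image.mp hz
      exact Finset.mem_filter.mpr ⟨Finset.mem_univ _, hmem S hS⟩
    have himg : ((Finset.powersetCard r T).image flip).card = k.choose r := by
      rw [Finset.card_image_of_injOn hinj, Finset.card_powersetCard]
    have := Finset.card_le_card hsub
    rw [himg] at this
    rw [hcard]
    exact_mod_cast this
  -- entropy chain
  have harg : (r : ℝ) * δ / ((δ - 1) * (n : ℝ)) = (r:ℝ) / a := by
    rw [ha]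
    have h1 : δ - 1 ≠ 0 := by linarith
    have h2 : (n:ℝ) ≠ 0 := ne_of_gt hn0
    have h3 : δ ≠ 0 := ne_of_gt hδ0
    first
    | (field_simp; ring)
    | field_simp
  have hexp : binH ((r : ℝ) * δ / ((δ - 1) * (n : ℝ))) * ((δ - 1) / δ) * (n : ℝ)
      = a * binH ((r:ℝ)/a) := by
    rw [harg, ha]; ring
  rw [hexp]
  have hchain : (2:ℝ) ^ (a * binH ((r:ℝ)/a)) ≤ ((n:ℝ)+1) * (k.choose r) := by
    calc (2:ℝ) ^ (a * binH ((r:ℝ)/a)) ≤ (2:ℝ) ^ ((k:ℝ) * binH ((r:ℝ)/(k:ℝ))) :=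
          Real.rpow_le_rpow_of_exponent_le (by norm_num) (mul_binH_mono r ha0 hra hak)
      _ ≤ ((k:ℝ)+1) * (k.choose r) := choose_entropy hrk hk0
      _ ≤ ((n:ℝ)+1) * (k.choose r) := by
          have : (k:ℝ) ≤ n := by exact_mod_cast hkn
          have hc : (0:ℝ) ≤ (k.choose r : ℝ) := Nat.cast_nonneg _
          nlinarith
  rw [div_le_iff₀ (by positivity : (0:ℝ) < (n:ℝ)+1)]
  calc (2:ℝ) ^ (a * binH ((r:ℝ)/a)) ≤ ((n:ℝ)+1) * (k.choose r) := hchain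
    _ ≤ ((n:ℝ)+1) * (Nat.card {z : Fin n → Bool // f.wstar - ε * f.totalWeight ≤ f.W z} : ℝ) :=
        mul_le_mul_of_nonneg_left hcount (by positivity)
    _ = (Nat.card {z : Fin n → Bool // f.wstar - ε * f.totalWeight ≤ f.W z} : ℝ) * ((n:ℝ)+1) :=
        mul_comm _ _

end Aux
end

section
/- Let f be an E-k-SAT formula on n ≥ 1 variables with m ≥ 1 clauses, where k ≥ 1 and each clause is a disjunction of exactly k literals over k distinct variables. Let ε ∈ (0,1] and let δ be a real number with δ ≥ 1 + ε(2^k − 1)/(2^k·k) (so δ > 1). Set r = ⌊n·ε(2^k − 1)/(δ·2^k·k)⌋. Then the number of assignments z ∈ {0,1}^n with C(f,z) ≥ (1−ε)·m* is at least 2^{H(rδ/((δ−1)n)) · ((δ−1)/δ)·n} / (n+1). -/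
/-- An E-k-SAT formula on `n` Boolean variables: `m` clauses, each clause `i` being a
disjunction of exactly `k` literals over `k` distinct variables. The `t`-th literal of clause
`i` is the variable `vars i t` if `sign i t = true`, and its negation otherwise. -/
structure EkSAT (n k : ℕ) where
  m : ℕ
  vars : Fin m → Fin k → Fin n
  vars_inj : ∀ i, Function.Injective (vars i)
  sign : Fin m → Fin k → Bool

namespace EkSAT

variable {n k : ℕ}

/-- The number `C(f,z)` of clauses of `f` satisfied by the assignment `z`: clause `i` is
satisfied iff some literal of it evaluates to true. -/
def count (f : EkSAT n k) (z : Fin n → Bool) : ℕ :=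
  (Finset.univ.filter (fun i : Fin f.m => ∃ t : Fin k, z (f.vars i t) = f.sign i t)).card

/-- The maximum number `m* = max_z C(f,z)` of simultaneously satisfiable clauses. -/
def mstar (f : EkSAT n k) : ℕ :=
  Finset.univ.sup f.count

end EkSAT

private def Fterm (N r i : ℕ) : ℕ := N.choose i * r ^ i * (N - r) ^ (N - i)

private lemma Fterm_le_max (N r : ℕ) (hr : r ≤ N) : ∀ i, i ≤ N → Fterm N r i ≤ Fterm N r r := by
  have step_up : ∀ i, i < r → Fterm N r i ≤ Fterm N r (i + 1) := by
    intro i hi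
    obtain ⟨t, rfl⟩ : ∃ t, r = i + 1 + t := ⟨r - i - 1, by omega⟩
    obtain ⟨a, rfl⟩ : ∃ a, N = (i + 1 + t) + a := ⟨N - (i + 1 + t), by omega⟩
    set r := i + 1 + t
    set N := r + a
    have key : N.choose (i + 1) * (i + 1) = N.choose i * (N - i) := Nat.choose_succ_right_eq N i
    refine Nat.le_of_mul_le_mul_left ?_ (show 0 < i + 1 by omega)
    have h1 : N - r = a := by omega
    have h2 : N - i = a + t + 1 := by omega
    have h3 : N - (i + 1) = a + t := by omega
    calc (i + 1) * Fterm N r i = N.choose i * r ^ i * a ^ (a + t) * ((i + 1) * a) := by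
          unfold Fterm; rw [h1, h2, pow_succ]; ring
      _ ≤ N.choose i * r ^ i * a ^ (a + t) * ((a + t + 1) * r) := by
          refine Nat.mul_le_mul_left _ ?_
          have : r = i + 1 + t := rfl
          nlinarith
      _ = (N.choose i * (N - i)) * (r ^ (i + 1) * a ^ (a + t)) := by rw [h2, pow_succ]; ring
      _ = (N.choose (i + 1) * (i + 1)) * (r ^ (i + 1) * a ^ (a + t)) := by rw [key]
      _ = (i + 1) * Fterm N r (i + 1) := by unfold Fterm; rw [h1, h3]; ring
  have step_down : ∀ i, r ≤ i → i < N → Fterm N r (i + 1) ≤ Fterm N r i := by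
    intro i hi hiN
    obtain ⟨t, rfl⟩ : ∃ t, i = r + t := ⟨i - r, by omega⟩
    obtain ⟨a, hNa⟩ : ∃ a, N = (r + t) + 1 + a := ⟨N - (r + t) - 1, by omega⟩
    set i := r + t
    have key : N.choose (i + 1) * (i + 1) = N.choose i * (N - i) := Nat.choose_succ_right_eq N i
    refine Nat.le_of_mul_le_mul_left ?_ (show 0 < i + 1 by omega)
    have h1 : N - r = a + t + 1 := by omega
    have h2 : N - i = a + 1 := by omega
    have h3 : N - (i + 1) = a := by omega
    calc (i + 1) * Fterm N r (i + 1)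
        = (N.choose (i + 1) * (i + 1)) * (r ^ (i + 1) * (a + t + 1) ^ a) := by
          unfold Fterm; rw [h1, h3]; ring
      _ = (N.choose i * (a + 1)) * (r ^ (i + 1) * (a + t + 1) ^ a) := by rw [key, h2]
      _ = N.choose i * r ^ i * (a + t + 1) ^ a * ((a + 1) * r) := by rw [pow_succ]; ring
      _ ≤ N.choose i * r ^ i * (a + t + 1) ^ a * ((i + 1) * (a + t + 1)) := by
          refine Nat.mul_le_mul_left _ ?_
          have : i = r + t := rfl
          nlinarith
      _ = (i + 1) * Fterm N r i := by unfold Fterm; rw [h1, h2, pow_succ]; ring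
  have up : ∀ j, ∀ i, i + j = r → Fterm N r i ≤ Fterm N r r := by
    intro j
    induction j with
    | zero => intro i h; rw [show i = r by omega]
    | succ j ih =>
      intro i h
      exact le_trans (step_up i (by omega)) (ih (i + 1) (by omega))
  have down : ∀ j, r + j ≤ N → Fterm N r (r + j) ≤ Fterm N r r := by
    intro j
    induction j with
    | zero => exact fun _ => le_rfl
    | succ j ih =>
      intro h
      exact le_trans (step_down (r + j) (by omega) (by omega)) (ih (by omega))
  intro i hiN
  rcases le_or_gt i r with h | h
  · exact up (r - i) i (by omega)
  · have := down (i - r) (by omega)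
    rwa [show r + (i - r) = i by omega] at this

open Real Finset

private noncomputable def gg (r x : ℝ) : ℝ :=
  x * Real.logb 2 x - r * Real.logb 2 r - (x - r) * Real.logb 2 (x - r)

private lemma two_rpow_cast_mul_logb (c : ℕ) :
    (2:ℝ) ^ ((c:ℝ) * Real.logb 2 (c:ℝ)) = (c:ℝ) ^ c := by
  rcases Nat.eq_zero_or_pos c with rfl | hc
  · simp
  · rw [mul_comm, Real.rpow_mul (by norm_num), Real.rpow_logb (by positivity) (by norm_num)
      (by exact_mod_cast hc), Real.rpow_natCast]

private lemma entropy_le_choose (N r : ℕ) (hr1 : 1 ≤ r) (hrN : r ≤ N) :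
    (2:ℝ) ^ (gg (r:ℝ) (N:ℝ)) ≤ ((N:ℝ) + 1) * (N.choose r : ℝ) := by
  have hN0 : 0 < N := lt_of_lt_of_le hr1 hrN
  have hNR : (0:ℝ) < (N:ℝ) := by exact_mod_cast hN0
  set p : ℝ := (r:ℝ) / (N:ℝ) with hp
  have hp0 : 0 ≤ p := by positivity
  have hp1 : p ≤ 1 := by
    rw [hp, div_le_one hNR]; exact_mod_cast hrN
  have hsum : ∑ i ∈ Finset.range (N + 1), p ^ i * (1 - p) ^ (N - i) * (N.choose i : ℝ) = 1 := by
    rw [← add_pow]; simp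
  -- each term is at most the term at r
  have hNN : (0:ℝ) < (N:ℝ) ^ N := by positivity
  have hterm : ∀ i ∈ Finset.range (N + 1),
      p ^ i * (1 - p) ^ (N - i) * (N.choose i : ℝ)
        ≤ p ^ r * (1 - p) ^ (N - r) * (N.choose r : ℝ) := by
    intro i hi
    have hiN : i ≤ N := by simpa [Nat.lt_succ_iff] using hi
    rw [← mul_le_mul_iff_of_pos_right hNN]
    have hconv : ∀ j, j ≤ N → p ^ j * (1 - p) ^ (N - j) * (N.choose j : ℝ) * (N:ℝ) ^ N
        = ((N.choose j * r ^ j * (N - r) ^ (N - j) : ℕ) : ℝ) := by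
      intro j hj
      have hsplit : (N:ℝ) ^ N = (N:ℝ) ^ j * (N:ℝ) ^ (N - j) := by
        rw [← pow_add]; congr 1; omega
      have h1 : p * (N:ℝ) = (r:ℝ) := by rw [hp]; field_simp
      have h2 : (1 - p) * (N:ℝ) = ((N - r : ℕ) : ℝ) := by
        rw [Nat.cast_sub hrN, hp]; field_simp
      push_cast [Nat.cast_sub hrN]
      rw [hsplit]
      calc p ^ j * (1 - p) ^ (N - j) * (N.choose j : ℝ) * ((N:ℝ) ^ j * (N:ℝ) ^ (N - j))
          = (N.choose j : ℝ) * (p * N) ^ j * ((1 - p) * N) ^ (N - j) := by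
            rw [mul_pow, mul_pow]; ring
        _ = (N.choose j : ℝ) * (r:ℝ) ^ j * ((N:ℝ) - (r:ℝ)) ^ (N - j) := by
            rw [h1, h2, Nat.cast_sub hrN]

    rw [hconv i hiN, hconv r hrN]
    exact_mod_cast Fterm_le_max N r hrN i hiN
  have hone : 1 ≤ ((N:ℝ) + 1) * (p ^ r * (1 - p) ^ (N - r) * (N.choose r : ℝ)) := by
    calc (1:ℝ) = ∑ i ∈ Finset.range (N + 1), p ^ i * (1 - p) ^ (N - i) * (N.choose i : ℝ) :=
          hsum.symm
      _ ≤ ∑ _i ∈ Finset.range (N + 1), p ^ r * (1 - p) ^ (N - r) * (N.choose r : ℝ) :=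
          Finset.sum_le_sum hterm
      _ = ((N:ℝ) + 1) * (p ^ r * (1 - p) ^ (N - r) * (N.choose r : ℝ)) := by
          rw [Finset.sum_const, Finset.card_range]; push_cast; ring
  -- compute 2 ^ gg
  have hgg : (2:ℝ) ^ (gg (r:ℝ) (N:ℝ)) * (p ^ r * (1 - p) ^ (N - r)) = 1 := by
    have hNr : ((N:ℝ) - (r:ℝ)) = ((N - r : ℕ) : ℝ) := by rw [Nat.cast_sub hrN]
    have e1 : (2:ℝ) ^ (gg (r:ℝ) (N:ℝ))
        = (N:ℝ) ^ N / ((r:ℝ) ^ r * ((N - r : ℕ) : ℝ) ^ (N - r)) := by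
      unfold gg
      rw [hNr, sub_sub, Real.rpow_sub (by norm_num), Real.rpow_add (by norm_num),
        two_rpow_cast_mul_logb, two_rpow_cast_mul_logb, two_rpow_cast_mul_logb]
    have e2 : p ^ r * (1 - p) ^ (N - r)
        = (r:ℝ) ^ r * ((N - r : ℕ) : ℝ) ^ (N - r) / (N:ℝ) ^ N := by
      have h1p : 1 - p = ((N - r : ℕ) : ℝ) / (N:ℝ) := by
        rw [Nat.cast_sub hrN, hp]; field_simp
      rw [hp, h1p, div_pow, div_pow, div_mul_div_comm, ← pow_add,
        show r + (N - r) = N by omega]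
    have hd1 : (0:ℝ) < (r:ℝ) ^ r := by positivity
    have hd2 : (0:ℝ) < ((N - r : ℕ) : ℝ) ^ (N - r) := by
      rcases Nat.eq_zero_or_pos (N - r) with h | h
      · rw [h]; norm_num
      · positivity
    rw [e1, e2]
    rw [div_mul_div_comm, mul_comm ((N:ℝ) ^ N), div_self
      (by exact (mul_pos (mul_pos hd1 hd2) hNN).ne')]
  have h2pos : (0:ℝ) < (2:ℝ) ^ (gg (r:ℝ) (N:ℝ)) := Real.rpow_pos_of_pos (by norm_num) _
  have := mul_le_mul_of_nonneg_left hone (le_of_lt h2pos)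
  rw [mul_one] at this
  calc (2:ℝ) ^ (gg (r:ℝ) (N:ℝ)) ≤ (2:ℝ) ^ (gg (r:ℝ) (N:ℝ)) *
        (((N:ℝ) + 1) * (p ^ r * (1 - p) ^ (N - r) * (N.choose r : ℝ))) := this
    _ = ((N:ℝ) + 1) * (N.choose r : ℝ) * ((2:ℝ) ^ (gg (r:ℝ) (N:ℝ)) * (p ^ r * (1 - p) ^ (N - r))) := by
        ring
    _ = ((N:ℝ) + 1) * (N.choose r : ℝ) := by rw [hgg, mul_one]

private lemma gg_mono {r x y : ℝ} (hr : 0 ≤ r) (hrx : r ≤ x) (hxy : x ≤ y) :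
    gg r x ≤ gg r y := by
  rcases eq_or_lt_of_le hr with rfl | hr0
  · unfold gg; simp
  rcases eq_or_lt_of_le hxy with rfl | hxy0
  · exact le_rfl
  set φ : ℝ → ℝ := fun t => t * Real.logb 2 t with hφdef
  have hφ : ConvexOn ℝ (Set.Ici 0) φ := by
    have heq : φ = (Real.log 2)⁻¹ • (fun t : ℝ => t * Real.log t) := by
      funext t
      simp only [hφdef, Pi.smul_apply, smul_eq_mul, Real.logb]
      ring
    rw [heq]
    exact Real.convexOn_mul_log.smul (inv_nonneg.mpr (Real.log_nonneg one_le_two))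
  set a := x - r with ha
  set b := y - r with hb
  have ha0 : (0:ℝ) ≤ a := by linarith
  have hb0 : (0:ℝ) ≤ b := by linarith
  have hx0 : (0:ℝ) ≤ x := by linarith
  have hy0 : (0:ℝ) ≤ y := by linarith
  have hax : a < x := by simp only [ha]; linarith
  have hay : a < y := by linarith
  have hby : b < y := by simp only [hb]; linarith
  have h1 : (φ x - φ a) / (x - a) ≤ (φ y - φ a) / (y - a) :=
    hφ.secant_mono (Set.mem_Ici.mpr ha0) (Set.mem_Ici.mpr hx0) (Set.mem_Ici.mpr hy0)
      hax.ne' hay.ne' hxy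
  have h2 : (φ a - φ y) / (a - y) ≤ (φ b - φ y) / (b - y) :=
    hφ.secant_mono (Set.mem_Ici.mpr hy0) (Set.mem_Ici.mpr ha0) (Set.mem_Ici.mpr hb0)
      hay.ne hby.ne (by simp only [ha, hb]; linarith)
  have e1 : (φ a - φ y) / (a - y) = (φ y - φ a) / (y - a) := by
    rw [← neg_sub (φ y), ← neg_sub y, neg_div_neg_eq]
  have e2 : (φ b - φ y) / (b - y) = (φ y - φ b) / (y - b) := by
    rw [← neg_sub (φ y), ← neg_sub y, neg_div_neg_eq]
  rw [e1, e2] at h2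
  have hxa : x - a = r := by simp only [ha]; ring
  have hyb : y - b = r := by simp only [hb]; ring
  have hya : 0 < y - a := by linarith
  have key : (φ x - φ a) / r ≤ (φ y - φ b) / r := by
    have t1 : (φ x - φ a) / r = (φ x - φ a) / (x - a) := by rw [hxa]
    have t2 : (φ y - φ b) / r = (φ y - φ b) / (y - b) := by rw [hyb]
    rw [t1, t2]
    exact le_trans h1 h2
  have key2 : φ x - φ a ≤ φ y - φ b := by
    have := mul_le_mul_of_nonneg_right key (le_of_lt hr0)
    rwa [div_mul_cancel₀ _ hr0.ne', div_mul_cancel₀ _ hr0.ne'] at this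
  unfold gg
  simp only [← ha, ← hb] at key2 ⊢
  have : φ x = x * Real.logb 2 x := rfl
  simp only [hφdef] at key2
  linarith [key2]
private lemma binH_mul {r x : ℝ} (hr : 0 < r) (hrx : r ≤ x) : binH (r / x) * x = gg r x := by
  have hx : 0 < x := lt_of_lt_of_le hr hrx
  rcases eq_or_lt_of_le hrx with rfl | hlt
  · rw [div_self hx.ne']
    unfold binH gg; simp
  · unfold binH gg
    have h1 : 1 - r / x = (x - r) / x := by field_simp
    have h2 : x - r ≠ 0 := by linarith
    rw [h1, Real.logb_div hr.ne' hx.ne', Real.logb_div h2 hx.ne']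
    field_simp
    ring
set_option maxHeartbeats 2000000 in
theorem EkSAT.count_near_optimal_lower_bound (n k : ℕ) (hn : 1 ≤ n) (hk : 1 ≤ k)
    (f : EkSAT n k) (hm : 1 ≤ f.m)
    (ε : ℝ) (hε0 : 0 < ε) (hε1 : ε ≤ 1)
    (δ : ℝ) (hδ : 1 + ε * ((2 : ℝ) ^ k - 1) / ((2 : ℝ) ^ k * (k : ℝ)) ≤ δ)
    (r : ℕ) (hr : r = ⌊(n : ℝ) * ε * ((2 : ℝ) ^ k - 1) / (δ * (2 : ℝ) ^ k * (k : ℝ))⌋₊) :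
    (2 : ℝ) ^ (binH ((r : ℝ) * δ / ((δ - 1) * (n : ℝ))) * ((δ - 1) / δ) * (n : ℝ)) / ((n : ℝ) + 1)
      ≤ (Nat.card {z : Fin n → Bool // (1 - ε) * (f.mstar : ℝ) ≤ (f.count z : ℝ)} : ℝ) := by
  classical
  have hA2 : (2 : ℝ) ≤ (2 : ℝ) ^ k := by
    calc (2 : ℝ) = 2 ^ 1 := (pow_one 2).symm
      _ ≤ 2 ^ k := pow_le_pow_right₀ (by norm_num) hk
  have hA0 : (0 : ℝ) < (2 : ℝ) ^ k := by positivity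
  have hA1 : (0 : ℝ) < (2 : ℝ) ^ k - 1 := by linarith
  have hB0 : (0 : ℝ) < (k : ℝ) := by exact_mod_cast hk
  have hB1 : (1 : ℝ) ≤ (k : ℝ) := by exact_mod_cast hk
  have hn0 : (0 : ℝ) < (n : ℝ) := by exact_mod_cast hn
  have hc0 : (0 : ℝ) < ε * ((2 : ℝ) ^ k - 1) / ((2 : ℝ) ^ k * (k : ℝ)) := by positivity
  have hδ1 : 1 < δ := by linarith
  have hδ0 : (0 : ℝ) < δ := by linarith
  -- optimal assignment
  obtain ⟨zstar, -, hzstar⟩ := Finset.exists_mem_eq_sup (Finset.univ : Finset (Fin n → Bool))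
    Finset.univ_nonempty f.count
  have hms : f.mstar = f.count zstar := hzstar
  -- m* ≥ 1
  have hms1 : 1 ≤ f.mstar := by
    set i0 : Fin f.m := ⟨0, hm⟩ with hi0
    set t0 : Fin k := ⟨0, hk⟩ with ht0
    set z0 : Fin n → Bool := fun v =>
      if h : ∃ t, f.vars i0 t = v then f.sign i0 h.choose else false with hz0
    have hsat : z0 (f.vars i0 t0) = f.sign i0 t0 := by
      have h : ∃ t, f.vars i0 t = f.vars i0 t0 := ⟨t0, rfl⟩
      have h2 : z0 (f.vars i0 t0) = f.sign i0 h.choose := dif_pos h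
      rw [h2, f.vars_inj i0 h.choose_spec]
    have h1 : 1 ≤ f.count z0 := by
      rw [EkSAT.count]
      refine Finset.card_pos.mpr ⟨i0, ?_⟩
      simp only [Finset.mem_filter, Finset.mem_univ, true_and]
      exact ⟨t0, hsat⟩
    calc 1 ≤ f.count z0 := h1
      _ ≤ f.mstar := Finset.le_sup (Finset.mem_univ z0)
  have hms0 : (0 : ℝ) < (f.mstar : ℝ) := by exact_mod_cast hms1
  -- witnesses
  set W : Finset (Fin f.m) :=
    Finset.univ.filter (fun i => ∃ t : Fin k, zstar (f.vars i t) = f.sign i t) with hW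
  have hWcard : W.card = f.mstar := by rw [hms, EkSAT.count]
  set tw : Fin f.m → Fin k := fun i =>
    if h : ∃ t : Fin k, zstar (f.vars i t) = f.sign i t then h.choose else ⟨0, hk⟩ with htw
  have htw_spec : ∀ i ∈ W, zstar (f.vars i (tw i)) = f.sign i (tw i) := by
    intro i hi
    rw [hW, Finset.mem_filter] at hi
    obtain ⟨-, h⟩ := hi
    simp only [htw, dif_pos h]
    exact h.choose_spec
  set d : Fin n → ℕ := fun v => (W.filter (fun i => f.vars i (tw i) = v)).card with hd
  have hdsum : ∑ v, d v = f.mstar := by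
    rw [← hWcard]
    exact (Finset.card_eq_sum_card_fiberwise (fun i _ => Finset.mem_univ (f.vars i (tw i)))).symm
  -- the good set
  set G : Finset (Fin n → Bool) :=
    Finset.univ.filter (fun z => (1 - ε) * (f.mstar : ℝ) ≤ (f.count z : ℝ)) with hG
  have hNatCard : (Nat.card {z : Fin n → Bool // (1 - ε) * (f.mstar : ℝ) ≤ (f.count z : ℝ)})
      = G.card := by
    rw [Nat.card_eq_fintype_card, Fintype.card_subtype]
  have hzstarG : zstar ∈ G := by
    rw [hG, Finset.mem_filter]
    refine ⟨Finset.mem_univ _, ?_⟩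
    rw [← hms]
    nlinarith [hms0]
  have hG1 : 1 ≤ G.card := Finset.card_pos.mpr ⟨zstar, hzstarG⟩
  rcases Nat.eq_zero_or_pos r with hr0 | hr1
  · -- r = 0 : trivial bound
    rw [hNatCard, hr0]
    have hbinH0 : binH ((0 : ℕ) * δ / ((δ - 1) * (n : ℝ))) = 0 := by
      norm_num [binH]
    rw [hbinH0, zero_mul, zero_mul, Real.rpow_zero]
    rw [div_le_iff₀ (by positivity)]
    have : (1 : ℝ) ≤ (G.card : ℝ) := by exact_mod_cast hG1
    nlinarith [hn0]
  -- main case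
  set x : ℝ := (δ - 1) * n / δ with hx
  have hvr : (r : ℝ) ≤ (n : ℝ) * ε * ((2 : ℝ) ^ k - 1) / (δ * (2 : ℝ) ^ k * k) := by
    rw [hr]; exact Nat.floor_le (by positivity)
  have hrx : (r : ℝ) ≤ x := by
    refine le_trans hvr ?_
    have e : (n : ℝ) * ε * ((2 : ℝ) ^ k - 1) / (δ * (2 : ℝ) ^ k * k)
        = (n : ℝ) * (ε * ((2 : ℝ) ^ k - 1) / ((2 : ℝ) ^ k * k)) / δ := by
      field_simp
    have e2 : x = (n : ℝ) * (δ - 1) / δ := by rw [hx]; ring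
    rw [e, e2]
    gcongr
    linarith
  have hrR0 : (0 : ℝ) < (r : ℝ) := by exact_mod_cast hr1
  have hx0 : 0 < x := lt_of_lt_of_le hrR0 hrx
  set N : ℕ := ⌈x⌉₊ with hN
  have hxN : x ≤ (N : ℝ) := Nat.le_ceil x
  have hNn : N ≤ n := by
    rw [hN]
    refine Nat.ceil_le.mpr ?_
    rw [hx, div_le_iff₀ hδ0]
    nlinarith
  have hrN : r ≤ N := by exact_mod_cast le_trans hrx hxN
  -- Markov
  set Bad : Finset (Fin n) :=
    Finset.univ.filter (fun v => ¬ ((d v : ℝ) * r ≤ ε * f.mstar)) with hBad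
  have hBadcard : (Bad.card : ℝ) * ε ≤ (r : ℝ) := by
    have h1 : (Bad.card : ℝ) * (ε * f.mstar) ≤ ∑ v ∈ Bad, (d v : ℝ) * r := by
      have := Finset.card_nsmul_le_sum Bad (fun v => (d v : ℝ) * r) (ε * f.mstar)
        (fun v hv => by
          rw [hBad, Finset.mem_filter] at hv
          exact le_of_lt (lt_of_not_ge hv.2))
      rwa [nsmul_eq_mul] at this
    have h2 : ∑ v ∈ Bad, (d v : ℝ) * r ≤ (f.mstar : ℝ) * r := by
      rw [← Finset.sum_mul]
      refine mul_le_mul_of_nonneg_right ?_ (by positivity)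
      have hsub : ∑ v ∈ Bad, (d v : ℝ) ≤ ∑ v, (d v : ℝ) :=
        Finset.sum_le_sum_of_subset_of_nonneg (Finset.subset_univ _)
          (fun _ _ _ => by positivity)
      have hcast : ∑ v, (d v : ℝ) = (f.mstar : ℝ) := by
        rw [← hdsum]; push_cast; rfl
      linarith
    have h3 : (Bad.card : ℝ) * ε * (f.mstar : ℝ) ≤ (r : ℝ) * (f.mstar : ℝ) := by nlinarith
    exact le_of_mul_le_mul_right h3 hms0
  have hBadlt : (Bad.card : ℝ) < (n : ℝ) / δ := by
    have h1 : (Bad.card : ℝ) ≤ (r : ℝ) / ε := by rw [le_div_iff₀ hε0]; exact hBadcard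
    have e : (n : ℝ) * ε * ((2 : ℝ) ^ k - 1) / (δ * (2 : ℝ) ^ k * k) / ε
        = (n : ℝ) * ((2 : ℝ) ^ k - 1) / (δ * (2 : ℝ) ^ k * k) := by
      field_simp
    have h3 : (r : ℝ) / ε ≤ (n : ℝ) * ((2 : ℝ) ^ k - 1) / (δ * (2 : ℝ) ^ k * k) := by
      rw [← e]; gcongr
    have h4 : (n : ℝ) * ((2 : ℝ) ^ k - 1) / (δ * (2 : ℝ) ^ k * k) < (n : ℝ) / δ := by
      rw [div_lt_div_iff₀ (by positivity) hδ0]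
      have hAk : (2:ℝ) ^ k - 1 < (2:ℝ) ^ k * k := by nlinarith
      nlinarith [mul_lt_mul_of_pos_left hAk (mul_pos hn0 hδ0)]
    linarith
  have hTN : N + Bad.card ≤ n := by
    have hceil : (N : ℝ) < x + 1 := Nat.ceil_lt_add_one hx0.le
    have hxn : x + (n : ℝ) / δ = n := by rw [hx]; field_simp; ring
    have hlt : ((N + Bad.card : ℕ) : ℝ) < ((n + 1 : ℕ) : ℝ) := by push_cast; linarith
    have := Nat.cast_lt.mp hlt
    omega
  set T : Finset (Fin n) :=
    Finset.univ.filter (fun v => (d v : ℝ) * r ≤ ε * f.mstar) with hT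
  have hTcard : N ≤ T.card := by
    have hsplit := Finset.card_filter_add_card_filter_not
      (s := (Finset.univ : Finset (Fin n))) (p := fun v => (d v : ℝ) * r ≤ ε * f.mstar)
    rw [Finset.card_univ, Fintype.card_fin] at hsplit
    rw [hT]
    rw [hBad] at hTN
    omega
  -- flipping map
  set flip : Finset (Fin n) → (Fin n → Bool) :=
    fun S => fun v => if v ∈ S then !(zstar v) else zstar v with hflip
  have hinto : ∀ S ∈ Finset.powersetCard r T, flip S ∈ G := by
    intro S hS
    rw [Finset.mem_powersetCard] at hS
    obtain ⟨hST, hScard⟩ := hS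
    have hsumS : (∑ v ∈ S, (d v : ℝ)) * r ≤ ε * f.mstar * r := by
      calc (∑ v ∈ S, (d v : ℝ)) * r = ∑ v ∈ S, (d v : ℝ) * r := by rw [Finset.sum_mul]
        _ ≤ ∑ _v ∈ S, ε * f.mstar := Finset.sum_le_sum (fun v hv => by
            have hvT := hST hv
            rw [hT, Finset.mem_filter] at hvT
            exact hvT.2)
        _ = S.card * (ε * f.mstar) := by rw [Finset.sum_const, nsmul_eq_mul]
        _ = ε * f.mstar * r := by rw [hScard]; ring
    have hsumS' : ∑ v ∈ S, (d v : ℝ) ≤ ε * f.mstar := le_of_mul_le_mul_right hsumS hrR0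
    have hkeep : W.filter (fun i => f.vars i (tw i) ∉ S)
        ⊆ Finset.univ.filter (fun i => ∃ t' : Fin k, (flip S) (f.vars i t') = f.sign i t') := by
      intro i hi
      rw [Finset.mem_filter] at hi ⊢
      obtain ⟨hiW, hiS⟩ := hi
      refine ⟨Finset.mem_univ _, ⟨tw i, ?_⟩⟩
      have : (flip S) (f.vars i (tw i)) = zstar (f.vars i (tw i)) := by
        rw [hflip]; exact if_neg hiS
      rw [this]
      exact htw_spec i hiW
    have hcount1 : (W.filter (fun i => f.vars i (tw i) ∉ S)).card ≤ f.count (flip S) := by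
      rw [EkSAT.count]; exact Finset.card_le_card hkeep
    have hsplit : (W.filter (fun i => f.vars i (tw i) ∈ S)).card
        + (W.filter (fun i => ¬ (f.vars i (tw i) ∈ S))).card = W.card :=
      Finset.card_filter_add_card_filter_not _
    have hfib2 : (W.filter (fun i => f.vars i (tw i) ∈ S)).card ≤ ∑ v ∈ S, d v := by
      rw [Finset.card_eq_sum_card_fiberwise
        (s := W.filter (fun i => f.vars i (tw i) ∈ S))
        (f := fun i => f.vars i (tw i)) (t := S) (fun i hi => (Finset.mem_filter.mp hi).2)]
      refine Finset.sum_le_sum (fun v hv => Finset.card_le_card ?_)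
      intro i hi
      rw [Finset.mem_filter] at hi ⊢
      exact ⟨(Finset.mem_filter.mp hi.1).1, hi.2⟩
    rw [hG, Finset.mem_filter]
    refine ⟨Finset.mem_univ _, ?_⟩
    have c1 : ((W.filter (fun i => f.vars i (tw i) ∉ S)).card : ℝ) ≤ (f.count (flip S) : ℝ) := by
      exact_mod_cast hcount1
    have c2 : ((W.filter (fun i => f.vars i (tw i) ∈ S)).card : ℝ) ≤ ∑ v ∈ S, (d v : ℝ) := by
      have : ((∑ v ∈ S, d v : ℕ) : ℝ) = ∑ v ∈ S, (d v : ℝ) := by push_cast; rfl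
      rw [← this]
      exact_mod_cast hfib2
    have c3 : ((W.filter (fun i => f.vars i (tw i) ∈ S)).card : ℝ)
        + ((W.filter (fun i => f.vars i (tw i) ∉ S)).card : ℝ) = (f.mstar : ℝ) := by
      rw [← hWcard]
      exact_mod_cast hsplit
    linarith
  have hinj : Set.InjOn flip (Finset.powersetCard r T : Set (Finset (Fin n))) := by
    intro S _ S' _ hEq
    ext v
    have hv := congrFun hEq v
    simp only [hflip] at hv
    constructor
    · intro h1
      by_contra h2
      rw [if_pos h1, if_neg h2] at hv
      exact (Bool.not_ne_self _) hv
    · intro h2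
      by_contra h1
      rw [if_neg h1, if_pos h2] at hv
      exact (Bool.not_ne_self _) hv.symm
  have hGcard : N.choose r ≤ G.card := by
    calc N.choose r ≤ T.card.choose r := Nat.choose_le_choose r hTcard
      _ = (Finset.powersetCard r T).card := (Finset.card_powersetCard r T).symm
      _ ≤ G.card := Finset.card_le_card_of_injOn flip hinto hinj
  -- analytic chain
  have hb1 : (r : ℝ) * δ / ((δ - 1) * n) = (r : ℝ) / x := by
    have h1 : δ - 1 ≠ 0 := by linarith
    have h2 : (n : ℝ) ≠ 0 := hn0.ne'
    rw [hx]
    field_simp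
  have hb2 : ((δ - 1) / δ) * (n : ℝ) = x := by rw [hx]; ring
  have hExp : binH ((r : ℝ) * δ / ((δ - 1) * n)) * ((δ - 1) / δ) * (n : ℝ) = gg (r : ℝ) x := by
    rw [hb1, mul_assoc, hb2]
    exact binH_mul hrR0 hrx
  rw [hExp, hNatCard]
  have step1 : (2 : ℝ) ^ gg (r : ℝ) x ≤ (2 : ℝ) ^ gg (r : ℝ) (N : ℝ) :=
    Real.rpow_le_rpow_of_exponent_le one_le_two (gg_mono hrR0.le hrx hxN)
  have step2 : (2 : ℝ) ^ gg (r : ℝ) (N : ℝ) ≤ ((N : ℝ) + 1) * (N.choose r : ℝ) :=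
    entropy_le_choose N r hr1 hrN
  have hNn' : (N : ℝ) + 1 ≤ (n : ℝ) + 1 := by
    have : (N : ℝ) ≤ (n : ℝ) := by exact_mod_cast hNn
    linarith
  have step3 : (2 : ℝ) ^ gg (r : ℝ) x ≤ ((n : ℝ) + 1) * (N.choose r : ℝ) :=
    le_trans step1 (le_trans step2 (mul_le_mul_of_nonneg_right hNn' (by positivity)))
  calc (2 : ℝ) ^ gg (r : ℝ) x / ((n : ℝ) + 1)
      ≤ (((n : ℝ) + 1) * (N.choose r : ℝ)) / ((n : ℝ) + 1) := by gcongr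
    _ = (N.choose r : ℝ) := mul_div_cancel_left₀ _ (by positivity)
    _ ≤ (G.card : ℝ) := by exact_mod_cast hGcard
end

section
/- Let f be a k-CNF formula on n ≥ 1 variables with m ≥ 1 clauses, where each clause is a disjunction of at least 1 and at most k literals over distinct variables, and let ℓ denote the total number of literal occurrences in f (so m ≤ ℓ ≤ km). Let ε ∈ (0,1] and set r = ⌊ε·m·n/(4ℓ)⌋. Then r ≤ n/2, and the number of assignments z ∈ {0,1}^n with C(f,z) ≥ (1−ε)·m* is at least 2^{H(2r/n)·(n/2)} / (n+1). -/
/-- A k-CNF formula on `n` Boolean variables: `m` clauses, each clause `i` being a disjunction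
of `arity i` literals (with `1 ≤ arity i ≤ k`) over distinct variables. The `t`-th literal of
clause `i` is the variable `vars i t` if `sign i t = true`, and its negation otherwise. -/
structure KCNF (n k : ℕ) where
  m : ℕ
  arity : Fin m → ℕ
  arity_pos : ∀ i, 1 ≤ arity i
  arity_le : ∀ i, arity i ≤ k
  vars : (i : Fin m) → Fin (arity i) → Fin n
  vars_inj : ∀ i, Function.Injective (vars i)
  sign : (i : Fin m) → Fin (arity i) → Bool

namespace KCNF

variable {n k : ℕ}

/-- The total number `ℓ` of literal occurrences in `f`. -/
def len (f : KCNF n k) : ℕ := ∑ i, f.arity i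

/-- The number `C(f,z)` of clauses of `f` satisfied by the assignment `z`: clause `i` is
satisfied iff some literal of it evaluates to true. -/
def count (f : KCNF n k) (z : Fin n → Bool) : ℕ :=
  (Finset.univ.filter
    (fun i : Fin f.m => ∃ t : Fin (f.arity i), z (f.vars i t) = f.sign i t)).card

/-- The maximum number `m* = max_z C(f,z)` of simultaneously satisfiable clauses. -/
def mstar (f : KCNF n k) : ℕ :=
  Finset.univ.sup f.count

end KCNF

open Finset Real

/-- Entropy lower bound for binomial coefficients (tailored version). -/
lemma entropy_choose_bound (n N r : ℕ) (hn : 1 ≤ n) (h4 : 4 * r ≤ n)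
    (hN1 : (n : ℝ) / 2 ≤ N) (hN2 : (N : ℝ) ≤ ((n : ℝ) + 1) / 2) (hNn : N ≤ n) :
    (2 : ℝ) ^ (binH (2 * (r : ℝ) / (n : ℝ)) * ((n : ℝ) / 2)) / ((n : ℝ) + 1)
      ≤ (N.choose r : ℝ) := by
  have hn0 : (0:ℝ) < n := by exact_mod_cast hn
  rcases Nat.eq_zero_or_pos r with hr0 | hr1
  · subst hr0
    simp only [Nat.cast_zero, mul_zero, zero_div, Nat.choose_zero_right, Nat.cast_one]
    have : binH 0 = 0 := by simp [binH]
    rw [this, zero_mul, Real.rpow_zero]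
    rw [div_le_one (by positivity)]
    linarith
  -- main case
  set p : ℝ := 2 * (r : ℝ) / (n : ℝ) with hpdef
  have hr0 : (0:ℝ) < r := by exact_mod_cast hr1
  have hp0 : 0 < p := by positivity
  have h4R : (4 * r : ℝ) ≤ n := by exact_mod_cast h4
  have hp2 : p ≤ 1/2 := by
    rw [hpdef, div_le_iff₀ hn0]; linarith
  have h1p0 : 0 < 1 - p := by linarith
  have hrN : r ≤ N := by
    have : (r : ℝ) ≤ N := by linarith
    exact_mod_cast this
  have hpn : p * (n:ℝ) = 2 * r := by rw [hpdef]; field_simp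
  set T : ℕ → ℝ := fun j => (N.choose j : ℝ) * p ^ j * (1 - p) ^ (N - j) with hT
  have hTnonneg : ∀ j, 0 ≤ T j := by
    intro j; rw [hT]; positivity
  have hsum : ∑ j ∈ range (N + 1), T j = 1 := by
    have hb := add_pow p (1 - p) N
    simp only [add_sub_cancel, one_pow] at hb
    rw [hT]
    rw [show ∑ j ∈ range (N+1), (N.choose j : ℝ) * p ^ j * (1-p)^(N-j)
        = ∑ j ∈ range (N+1), p ^ j * (1-p)^(N-j) * (N.choose j : ℝ) from
      Finset.sum_congr rfl (fun j _ => by ring)]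
    rw [← hb]
  -- step lemma
  have key : ∀ j, j < N → (((N:ℝ) - j) * p ≤ ((j:ℝ) + 1) * (1 - p) → T (j+1) ≤ T j)
      ∧ (((j:ℝ) + 1) * (1 - p) ≤ ((N:ℝ) - j) * p → T j ≤ T (j+1)) := by
    intro j hj
    have hc : ((N.choose (j+1) : ℝ) * ((j:ℝ)+1)) = (N.choose j : ℝ) * ((N:ℝ) - j) := by
      have h1 := Nat.choose_succ_right_eq N j
      have h2 : ((N.choose (j+1) * (j+1) : ℕ) : ℝ) = ((N.choose j * (N - j) : ℕ) : ℝ) := by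
        rw [h1]
      push_cast [Nat.cast_sub hj.le] at h2
      exact h2
    have hpow : (1-p) ^ (N - j) = (1-p) ^ (N - j - 1) * (1-p) := by
      rw [← pow_succ]; congr 1; omega
    have hTj : T j = (N.choose j : ℝ) * p ^ j * ((1-p) ^ (N - j - 1) * (1 - p)) := by
      simp only [hT]; rw [hpow]
    have hTj1 : T (j+1) = (N.choose (j+1) : ℝ) * (p ^ j * p) * (1-p) ^ (N - j - 1) := by
      simp only [hT]
      rw [show N - (j+1) = N - j - 1 from by omega, pow_succ]
    have h3 : (0:ℝ) < (j:ℝ) + 1 := by positivity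
    constructor
    · intro h
      rw [hTj, hTj1, ← mul_le_mul_iff_of_pos_right h3]
      have h2 := mul_le_mul_of_nonneg_left h
        (show (0:ℝ) ≤ (N.choose j : ℝ) * p ^ j * (1-p) ^ (N-j-1) by positivity)
      calc (N.choose (j+1) : ℝ) * (p ^ j * p) * (1-p) ^ (N - j - 1) * ((j:ℝ)+1)
          = (N.choose j : ℝ) * p ^ j * (1-p) ^ (N-j-1) * (((N:ℝ) - j) * p) := by
            rw [show (N.choose (j+1) : ℝ) * (p ^ j * p) * (1-p) ^ (N - j - 1) * ((j:ℝ)+1)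
              = ((N.choose (j+1) : ℝ) * ((j:ℝ)+1)) * (p ^ j * p) * (1-p) ^ (N - j - 1) from by
                ring, hc]
            ring
        _ ≤ (N.choose j : ℝ) * p ^ j * (1-p) ^ (N-j-1) * (((j:ℝ)+1) * (1-p)) := h2
        _ = (N.choose j : ℝ) * p ^ j * ((1-p) ^ (N-j-1) * (1-p)) * ((j:ℝ)+1) := by ring
    · intro h
      rw [hTj, hTj1, ← mul_le_mul_iff_of_pos_right h3]
      have h2 := mul_le_mul_of_nonneg_left h
        (show (0:ℝ) ≤ (N.choose j : ℝ) * p ^ j * (1-p) ^ (N-j-1) by positivity)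
      calc (N.choose j : ℝ) * p ^ j * ((1-p) ^ (N-j-1) * (1-p)) * ((j:ℝ)+1)
          = (N.choose j : ℝ) * p ^ j * (1-p) ^ (N-j-1) * (((j:ℝ)+1) * (1-p)) := by ring
        _ ≤ (N.choose j : ℝ) * p ^ j * (1-p) ^ (N-j-1) * (((N:ℝ) - j) * p) := h2
        _ = (N.choose (j+1) : ℝ) * (p ^ j * p) * (1-p) ^ (N - j - 1) * ((j:ℝ)+1) := by
            rw [show (N.choose (j+1) : ℝ) * (p ^ j * p) * (1-p) ^ (N - j - 1) * ((j:ℝ)+1)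
              = ((N.choose (j+1) : ℝ) * ((j:ℝ)+1)) * (p ^ j * p) * (1-p) ^ (N - j - 1) from by
                ring, hc]
            ring
  -- T is maximized at r : upper side
  have hdec : ∀ d : ℕ, T (r + d) ≤ T r := by
    intro d
    induction d with
    | zero => exact le_refl _
    | succ d ih =>
      rcases Nat.lt_or_ge (r + d) N with hlt | hge
      · refine le_trans ((key (r+d) hlt).1 ?_) ih
        push_cast
        nlinarith [mul_le_mul_of_nonneg_right hN2 hp0.le, hpn, hp2,
          (by positivity : (0:ℝ) ≤ (d:ℝ)), hp0.le]
      · have hz : T (r + d + 1) = 0 := by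
          simp only [hT]
          rw [Nat.choose_eq_zero_of_lt (by omega)]; simp
        exact hz.trans_le (hTnonneg r)
  -- lower side
  have hinc : ∀ d : ℕ, T (r - d) ≤ T r := by
    intro d
    induction d with
    | zero => exact le_refl _
    | succ d ih =>
      rcases Nat.lt_or_ge d r with hdr | hdr
      · have hj : r - (d+1) < N := by omega
        have hstep := (key (r - (d+1)) hj).2
        have hrd : r - (d+1) + 1 = r - d := by omega
        rw [hrd] at hstep
        refine le_trans (hstep ?_) ih
        have hjr : ((r - (d+1) : ℕ) : ℝ) + 1 ≤ r := by
          have : ((r - (d+1) : ℕ) : ℝ) = (r:ℝ) - (d+1:ℕ) := by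
            push_cast [Nat.cast_sub (by omega : d + 1 ≤ r)]; ring
          rw [this]; push_cast; linarith [ (by positivity : (0:ℝ) ≤ (d:ℝ)) ]
        have hjN : ((r - (d+1) : ℕ) : ℝ) ≤ (r:ℝ) - 1 := by linarith
        nlinarith [mul_le_mul_of_nonneg_right hN1 hp0.le, hpn, hp0.le, h1p0.le, hjr]
      · have : r - (d+1) = r - d := by omega
        rw [this]; exact ih
  have hmax : ∀ j, T j ≤ T r := by
    intro j
    rcases le_total r j with h | h
    · obtain ⟨d, rfl⟩ := Nat.exists_eq_add_of_le h
      exact hdec d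
    · have := hinc (r - j)
      rwa [show r - (r - j) = j from by omega] at this
  -- T r ≥ 1/(n+1)
  have hTr : 1 / ((n:ℝ) + 1) ≤ T r := by
    have hle : (1:ℝ) ≤ ((N:ℝ) + 1) * T r := by
      have : ∑ j ∈ range (N+1), T j ≤ ∑ _j ∈ range (N+1), T r :=
        Finset.sum_le_sum (fun j _ => hmax j)
      rw [hsum, Finset.sum_const, Finset.card_range, nsmul_eq_mul] at this
      push_cast at this; linarith
    have hNn' : (N:ℝ) + 1 ≤ (n:ℝ) + 1 := by
      have : (N:ℝ) ≤ n := by exact_mod_cast hNn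
      linarith
    rw [div_le_iff₀ (by positivity)]
    nlinarith [hTnonneg r]
  -- convert to rpow form
  set A : ℝ := p ^ (r:ℝ) with hA
  set B : ℝ := (1-p) ^ ((n:ℝ)/2 - r) with hB
  have hA0 : 0 < A := Real.rpow_pos_of_pos hp0 _
  have hB0 : 0 < B := Real.rpow_pos_of_pos h1p0 _
  have hBT : T r ≤ (N.choose r : ℝ) * (A * B) := by
    have e1 : p ^ (r:ℕ) = A := by rw [hA, Real.rpow_natCast]
    have e2 : (1-p) ^ (N - r : ℕ) = (1-p) ^ ((N:ℝ) - r) := by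
      rw [← Real.rpow_natCast]; congr 1
      push_cast [Nat.cast_sub hrN]; ring
    have e3 : (1-p) ^ ((N:ℝ) - r) ≤ B := by
      rw [hB]
      exact Real.rpow_le_rpow_of_exponent_ge h1p0 (by linarith) (by linarith)
    calc T r = (N.choose r : ℝ) * A * (1-p) ^ ((N:ℝ) - r) := by
          simp only [hT]; rw [e1, e2]
      _ ≤ (N.choose r : ℝ) * A * B := by
          exact mul_le_mul_of_nonneg_left e3 (by positivity)
      _ = (N.choose r : ℝ) * (A * B) := by ring
  -- entropy identity
  have hpn2 : p * ((n:ℝ)/2) = r := by linarith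
  have h1pn2 : (1 - p) * ((n:ℝ)/2) = (n:ℝ)/2 - r := by linear_combination -hpn2
  have hEE : binH p * ((n:ℝ)/2)
      = (-(r:ℝ)) * Real.logb 2 p + (-((n:ℝ)/2 - r)) * Real.logb 2 (1-p) := by
    simp only [binH]
    linear_combination (-(Real.logb 2 p)) * hpn2 + (-(Real.logb 2 (1-p))) * h1pn2
  have hE : (2:ℝ) ^ (binH p * ((n:ℝ)/2)) = A⁻¹ * B⁻¹ := by
    rw [hEE, Real.rpow_add (by norm_num : (0:ℝ) < 2)]
    congr 1
    · rw [show (-(r:ℝ)) * Real.logb 2 p = Real.logb 2 p * (-(r:ℝ)) from mul_comm _ _,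
        Real.rpow_mul (by norm_num : (0:ℝ) ≤ 2),
        Real.rpow_logb (by norm_num) (by norm_num) hp0,
        Real.rpow_neg hp0.le, hA]
    · rw [show (-((n:ℝ)/2 - r)) * Real.logb 2 (1-p)
            = Real.logb 2 (1-p) * (-((n:ℝ)/2 - r)) from mul_comm _ _,
        Real.rpow_mul (by norm_num : (0:ℝ) ≤ 2),
        Real.rpow_logb (by norm_num) (by norm_num) h1p0,
        Real.rpow_neg h1p0.le, hB]
  -- finish
  have hfin : 1 / ((n:ℝ)+1) ≤ (N.choose r : ℝ) * (A * B) := le_trans hTr hBT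
  have h10 : 1/((n:ℝ)+1) * (A*B)⁻¹ ≤ ((N.choose r : ℝ) * (A*B)) * (A*B)⁻¹ :=
    mul_le_mul_of_nonneg_right hfin (by positivity)
  have h11 : ((N.choose r : ℝ) * (A*B)) * (A*B)⁻¹ = (N.choose r : ℝ) := by
    field_simp
  rw [hE]
  calc A⁻¹ * B⁻¹ / ((n:ℝ)+1) = 1/((n:ℝ)+1) * (A*B)⁻¹ := by
        rw [mul_inv]; ring
    _ ≤ (N.choose r : ℝ) := by rw [← h11]; exact h10

namespace KCNF

variable {n k : ℕ}

/-- number of occurrences of variable v -/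
def occ (f : KCNF n k) (v : Fin n) : ℕ :=
  ∑ i, (Finset.univ.filter (fun t : Fin (f.arity i) => f.vars i t = v)).card

lemma sum_occ (f : KCNF n k) : ∑ v, f.occ v = f.len := by
  unfold occ len
  rw [Finset.sum_comm]
  refine Finset.sum_congr rfl (fun i _ => ?_)
  rw [← Finset.card_eq_sum_card_fiberwise (fun t _ => Finset.mem_univ (f.vars i t))]
  simp

lemma m_le_len (f : KCNF n k) : f.m ≤ f.len := by
  unfold len
  calc f.m = ∑ _i : Fin f.m, 1 := by simp
    _ ≤ ∑ i, f.arity i := Finset.sum_le_sum (fun i _ => f.arity_pos i)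

lemma count_le_mstar (f : KCNF n k) (z : Fin n → Bool) : f.count z ≤ f.mstar :=
  Finset.le_sup (Finset.mem_univ z)

lemma exists_count_eq_mstar (f : KCNF n k) : ∃ z, f.count z = f.mstar := by
  obtain ⟨z, _, hz⟩ := Finset.exists_mem_eq_sup (Finset.univ : Finset (Fin n → Bool))
    ⟨fun _ => true, Finset.mem_univ _⟩ f.count
  exact ⟨z, hz.symm⟩

lemma m_le_two_mstar (f : KCNF n k) : f.m ≤ 2 * f.mstar := by
  classical
  set z : Fin n → Bool := fun _ => true with hz
  have hcover : (Finset.univ : Finset (Fin f.m)) =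
      (Finset.univ.filter (fun i => ∃ t, z (f.vars i t) = f.sign i t)) ∪
      (Finset.univ.filter (fun i => ∃ t, (fun v => !z v) (f.vars i t) = f.sign i t)) := by
    ext i
    simp only [Finset.mem_univ, Finset.mem_union, Finset.mem_filter, true_and, true_iff]
    set t0 : Fin (f.arity i) := ⟨0, f.arity_pos i⟩
    rcases Bool.eq_false_or_eq_true (f.sign i t0) with h | h
    · left; exact ⟨t0, by simp [hz, h]⟩
    · right; exact ⟨t0, by simp [hz, h]⟩
  have := Finset.card_union_le
      (Finset.univ.filter (fun i => ∃ t, z (f.vars i t) = f.sign i t))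
      (Finset.univ.filter (fun i => ∃ t, (fun v => !z v) (f.vars i t) = f.sign i t))
  have hm : f.m = (Finset.univ : Finset (Fin f.m)).card := by simp
  have h1 : f.count z ≤ f.mstar := f.count_le_mstar z
  have h2 : f.count (fun v => !z v) ≤ f.mstar := f.count_le_mstar _
  unfold count at h1 h2
  have hm2 : f.m = ((Finset.univ.filter (fun i => ∃ t, z (f.vars i t) = f.sign i t)) ∪
      (Finset.univ.filter (fun i => ∃ t, (fun v => !z v) (f.vars i t) = f.sign i t))).card := by
    rw [← hcover]; simp
  omega

lemma count_flip (f : KCNF n k) (z : Fin n → Bool) (S : Finset (Fin n)) :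
    f.count z ≤ f.count (fun v => if v ∈ S then !z v else z v) + ∑ v ∈ S, f.occ v := by
  classical
  set z' : Fin n → Bool := fun v => if v ∈ S then !z v else z v with hz'
  set A := Finset.univ.filter (fun i : Fin f.m => ∃ t, z (f.vars i t) = f.sign i t) with hA
  set B := Finset.univ.filter (fun i : Fin f.m => ∃ t, z' (f.vars i t) = f.sign i t) with hB
  set Tc := Finset.univ.filter (fun i : Fin f.m => ∃ t, f.vars i t ∈ S) with hTc
  have hsub : A ⊆ B ∪ Tc := by
    intro i hi
    rw [hA, Finset.mem_filter] at hi
    obtain ⟨-, t, ht⟩ := hi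
    rw [Finset.mem_union, hB, hTc, Finset.mem_filter, Finset.mem_filter]
    by_cases hS : ∃ t', f.vars i t' ∈ S
    · right; exact ⟨Finset.mem_univ _, hS⟩
    · left
      push_neg at hS
      refine ⟨Finset.mem_univ _, t, ?_⟩
      simpa [hz', hS t] using ht
  have hTcard : Tc.card ≤ ∑ v ∈ S, f.occ v := by
    have h1 : Tc.card = ∑ _i ∈ Tc, 1 := by simp
    have h2 : ∀ i ∈ Tc, 1 ≤ ∑ v ∈ S, (Finset.univ.filter
        (fun t : Fin (f.arity i) => f.vars i t = v)).card := by
      intro i hi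
      rw [hTc, Finset.mem_filter] at hi
      obtain ⟨-, t, ht⟩ := hi
      calc 1 ≤ (Finset.univ.filter
            (fun t' : Fin (f.arity i) => f.vars i t' = f.vars i t)).card := by
            rw [Nat.one_le_iff_ne_zero, ← Nat.pos_iff_ne_zero, Finset.card_pos]
            exact ⟨t, by simp⟩
        _ ≤ ∑ v ∈ S, (Finset.univ.filter
            (fun t' : Fin (f.arity i) => f.vars i t' = v)).card :=
            Finset.single_le_sum (f := fun v => (Finset.univ.filter
              (fun t' : Fin (f.arity i) => f.vars i t' = v)).card)
              (fun v _ => Nat.zero_le _) ht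
    calc Tc.card = ∑ _i ∈ Tc, 1 := h1
      _ ≤ ∑ i ∈ Tc, ∑ v ∈ S, (Finset.univ.filter
            (fun t : Fin (f.arity i) => f.vars i t = v)).card :=
          Finset.sum_le_sum h2
      _ ≤ ∑ i, ∑ v ∈ S, (Finset.univ.filter
            (fun t : Fin (f.arity i) => f.vars i t = v)).card :=
          Finset.sum_le_sum_of_subset (Finset.subset_univ _)
      _ = ∑ v ∈ S, f.occ v := by rw [Finset.sum_comm]; rfl
  calc f.count z = A.card := rfl
    _ ≤ (B ∪ Tc).card := Finset.card_le_card hsub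
    _ ≤ B.card + Tc.card := Finset.card_union_le _ _
    _ ≤ f.count z' + ∑ v ∈ S, f.occ v := by
        have : f.count z' = B.card := rfl
        omega

end KCNF

theorem KCNF.count_near_optimal_lower_bound (n k : ℕ) (hn : 1 ≤ n)
    (f : KCNF n k) (hm : 1 ≤ f.m)
    (ε : ℝ) (hε0 : 0 < ε) (hε1 : ε ≤ 1)
    (r : ℕ) (hr : r = ⌊ε * (f.m : ℝ) * (n : ℝ) / (4 * (f.len : ℝ))⌋₊) :
    (r : ℝ) ≤ (n : ℝ) / 2 ∧
    (2 : ℝ) ^ (binH (2 * (r : ℝ) / (n : ℝ)) * ((n : ℝ) / 2)) / ((n : ℝ) + 1)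
      ≤ (Nat.card {z : Fin n → Bool // (1 - ε) * (f.mstar : ℝ) ≤ (f.count z : ℝ)} : ℝ) := by
  classical
  have hn0 : (0:ℝ) < n := by exact_mod_cast hn
  have hlen : 1 ≤ f.len := le_trans hm f.m_le_len
  have hl0 : (0:ℝ) < f.len := by exact_mod_cast hlen
  have hml : (f.m : ℝ) ≤ f.len := by exact_mod_cast f.m_le_len
  have hm0 : (0:ℝ) < f.m := by exact_mod_cast hm
  set x : ℝ := ε * (f.m : ℝ) * (n : ℝ) / (4 * (f.len : ℝ)) with hx
  have hx0 : 0 ≤ x := by positivity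
  have hrx : (r:ℝ) ≤ x := by rw [hr]; exact Nat.floor_le hx0
  have hx4 : x ≤ (n:ℝ) / 4 := by
    have hεm : ε * (f.m:ℝ) ≤ (f.len:ℝ) := by nlinarith
    rw [hx, div_le_div_iff₀ (by positivity) (by norm_num)]
    nlinarith [mul_le_mul_of_nonneg_right hεm hn0.le]
  have h4 : 4 * r ≤ n := by
    have : (4 * r : ℝ) ≤ n := by linarith
    exact_mod_cast this
  have hrn2 : (r:ℝ) ≤ (n:ℝ)/2 := by
    have : (4*r:ℝ) ≤ n := by exact_mod_cast h4
    push_cast at this; linarith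
  refine ⟨hrn2, ?_⟩
  -- the half-size parameter
  set N : ℕ := (n+1)/2 with hN
  have hN1 : (n : ℝ) / 2 ≤ N := by
    have h1 : n ≤ 2 * ((n+1)/2) := by omega
    have : (n:ℝ) ≤ 2 * N := by exact_mod_cast h1
    linarith
  have hN2 : (N : ℝ) ≤ ((n : ℝ) + 1) / 2 := by
    have h1 : 2 * ((n+1)/2) ≤ n + 1 := by omega
    have : (2 * N : ℝ) ≤ (n:ℝ) + 1 := by exact_mod_cast h1
    linarith
  have hNn : N ≤ n := by omega
  -- low-occurrence variables
  set L : Finset (Fin n) := Finset.univ.filter (fun v => n * f.occ v ≤ 2 * f.len) with hL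
  have hLcard : N ≤ L.card := by
    set Lc : Finset (Fin n) := Finset.univ.filter (fun v => ¬ (n * f.occ v ≤ 2 * f.len))
      with hLc
    have hsplit : L.card + Lc.card = n := by
      rw [hL, hLc, Finset.card_filter_add_card_filter_not]
      simp
    have hsum2 : ∑ v ∈ Lc, f.occ v ≤ f.len := by
      rw [← f.sum_occ]
      exact Finset.sum_le_sum_of_subset (Finset.subset_univ _)
    have hbig : Lc.card * (2 * f.len + 1) ≤ n * f.len := by
      calc Lc.card * (2 * f.len + 1) = ∑ _v ∈ Lc, (2 * f.len + 1) := by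
            rw [Finset.sum_const, smul_eq_mul, mul_comm]
        _ ≤ ∑ v ∈ Lc, n * f.occ v := by
            refine Finset.sum_le_sum (fun v hv => ?_)
            rw [hLc, Finset.mem_filter] at hv
            omega
        _ = n * ∑ v ∈ Lc, f.occ v := by rw [Finset.mul_sum]
        _ ≤ n * f.len := Nat.mul_le_mul_left n hsum2
    by_contra hcon
    push_neg at hcon
    have hc2 : n + 1 ≤ 2 * Lc.card := by omega
    have := Nat.mul_le_mul hc2 (le_refl (2 * f.len + 1))
    nlinarith [hbig, hlen]
  -- optimal assignment and flips
  obtain ⟨z0, hz0⟩ := f.exists_count_eq_mstar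
  set F : Finset (Fin n) → (Fin n → Bool) := fun S v => if v ∈ S then !z0 v else z0 v with hF
  have hFinj : Function.Injective F := by
    intro S T hST
    ext v
    have h1 := congrFun hST v
    by_cases hvS : v ∈ S <;> by_cases hvT : v ∈ T <;>
      simp [hF, hvS, hvT] at h1 ⊢
  set P : (Fin n → Bool) → Prop := fun z => (1 - ε) * (f.mstar : ℝ) ≤ (f.count z : ℝ) with hP
  have hmem : ∀ S ∈ Finset.powersetCard r L, F S ∈ Finset.univ.filter P := by
    intro S hS
    rw [Finset.mem_powersetCard] at hS
    obtain ⟨hSL, hScard⟩ := hS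
    rw [Finset.mem_filter]
    refine ⟨Finset.mem_univ _, ?_⟩
    -- loss bound
    have hloss : ((∑ v ∈ S, f.occ v : ℕ) : ℝ) ≤ ε * f.mstar := by
      have hocc : ∀ v ∈ S, (f.occ v : ℝ) ≤ 2 * f.len / n := by
        intro v hv
        have := hSL hv
        rw [hL, Finset.mem_filter] at this
        have h2 : (n * f.occ v : ℝ) ≤ 2 * f.len := by exact_mod_cast this.2
        rw [le_div_iff₀ hn0]
        push_cast at h2 ⊢
        linarith
      have h1 : ((∑ v ∈ S, f.occ v : ℕ) : ℝ) ≤ (r : ℝ) * (2 * f.len / n) := by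
        push_cast
        calc ∑ v ∈ S, (f.occ v : ℝ) ≤ ∑ _v ∈ S, (2 * (f.len:ℝ) / n) :=
              Finset.sum_le_sum hocc
          _ = (r : ℝ) * (2 * f.len / n) := by
              rw [Finset.sum_const, hScard, nsmul_eq_mul]
      have h2 : (r : ℝ) * (2 * f.len / n) ≤ ε * f.m / 2 := by
        have hxe : x * (2 * f.len / n) = ε * f.m / 2 := by
          rw [hx]; field_simp; ring
        rw [← hxe]
        exact mul_le_mul_of_nonneg_right hrx (by positivity)
      have h3 : (f.m : ℝ) ≤ 2 * f.mstar := by exact_mod_cast f.m_le_two_mstar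
      nlinarith [mul_le_mul_of_nonneg_left h3 hε0.le]
    have hflip := f.count_flip z0 S
    have hflipR : (f.mstar : ℝ) ≤ (f.count (F S) : ℝ) + ((∑ v ∈ S, f.occ v : ℕ) : ℝ) := by
      rw [← hz0]
      have : f.count (fun v => if v ∈ S then !z0 v else z0 v) = f.count (F S) := rfl
      rw [this] at hflip
      exact_mod_cast hflip
    rw [hP]
    linarith [hflipR, hloss]
  have hinjcard : (Finset.powersetCard r L).card ≤ (Finset.univ.filter P).card :=
    Finset.card_le_card_of_injOn F hmem (Function.Injective.injOn hFinj)
  have hpows : (Finset.powersetCard r L).card = L.card.choose r :=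
    Finset.card_powersetCard r L
  have hchoose : N.choose r ≤ L.card.choose r := Nat.choose_le_choose r hLcard
  have hNatcard : Nat.card {z : Fin n → Bool // (1 - ε) * (f.mstar : ℝ) ≤ (f.count z : ℝ)}
      = (Finset.univ.filter P).card := by
    rw [Nat.card_eq_fintype_card, Fintype.card_subtype]
  have hfinal : N.choose r ≤
      Nat.card {z : Fin n → Bool // (1 - ε) * (f.mstar : ℝ) ≤ (f.count z : ℝ)} := by
    rw [hNatcard]
    calc N.choose r ≤ L.card.choose r := hchoose
      _ = (Finset.powersetCard r L).card := hpows.symm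
      _ ≤ (Finset.univ.filter P).card := hinjcard
  calc (2 : ℝ) ^ (binH (2 * (r : ℝ) / (n : ℝ)) * ((n : ℝ) / 2)) / ((n : ℝ) + 1)
      ≤ (N.choose r : ℝ) := entropy_choose_bound n N r hn h4 hN1 hN2 hNn
    _ ≤ _ := by exact_mod_cast hfinal
end
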